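/- arXiv:1509.07462 — 5 statements merged into one kernel-verified Lean document; each statement's English description precedes it below -/
import Mathlib

section
/- Let H be a finitely generated reduced commutative cancellative monoid. Then H is a BF-monoid, the set of distances Δ(H) is finite, and the elasticity ρ(H) is finite. Moreover, there exists a ∈ H with ρ(L(a)) = ρ(H), and there exists M ∈ ℕ such that ρ_k(H) − ρ_{k−1}(H) ≤ M for all k ≥ 2. -/
open scoped Classical ENNReal

/-- The set of lengths of `a`: all `k` such that `a` is a product of `k` irreducibles,
with the convention `L(a) = {0}` for units. -/
noncomputable def lengths {M : Type*} [Monoid M] (a : M) : Set ℕ :=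
  if IsUnit a then {0}
  else {k | ∃ l : List M, l.length = k ∧ (∀ x ∈ l, Irreducible x) ∧ l.prod = a}

/-- A monoid is atomic if every nonunit is a finite product of irreducibles (atoms). -/
def Atomic (M : Type*) [Monoid M] : Prop :=
  ∀ a : M, ¬IsUnit a → ∃ l : List M, (∀ x ∈ l, Irreducible x) ∧ l.prod = a

/-- The set of distances of a set `L ⊆ ℕ`. -/
def distances (L : Set ℕ) : Set ℕ :=
  {d | 0 < d ∧ ∃ k ∈ L, k + d ∈ L ∧ ∀ m ∈ L, k ≤ m → m ≤ k + d → m = k ∨ m = k + d}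

/-- The set of distances `Δ(H)` of a monoid. -/
def DeltaH (M : Type*) [Monoid M] : Set ℕ :=
  ⋃ a : M, distances (lengths a)

/-- The union `U_k(H)` of all sets of lengths containing `k`. -/
def lengthUnion (M : Type*) [Monoid M] (k : ℕ) : Set ℕ :=
  {ℓ | ∃ l1 l2 : List M, l1.length = k ∧ l2.length = ℓ ∧
      (∀ x ∈ l1, Irreducible x) ∧ (∀ x ∈ l2, Irreducible x) ∧ l1.prod = l2.prod}

/-- The `k`-th elasticity `ρ_k(H) = sup U_k(H)`, valued in `ℝ≥0∞`. -/
noncomputable def rhoK (M : Type*) [Monoid M] (k : ℕ) : ℝ≥0∞ :=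
  ⨆ ℓ ∈ lengthUnion M k, (ℓ : ℝ≥0∞)

/-- `λ_k(H) = min U_k(H)`. -/
noncomputable def lamK (M : Type*) [Monoid M] (k : ℕ) : ℕ :=
  sInf (lengthUnion M k)

/-- The elasticity `ρ(L) = sup L / min L` of a set of lengths, with `ρ({0}) = 1`. -/
noncomputable def setElasticity (L : Set ℕ) : ℝ≥0∞ :=
  if L = {0} then 1 else (⨆ n ∈ L, (n : ℝ≥0∞)) / ((sInf L : ℕ) : ℝ≥0∞)

/-- The elasticity `ρ(H) = sup { ρ(L(a)) : a ∈ H }`. -/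
noncomputable def elasticity (M : Type*) [Monoid M] : ℝ≥0∞ :=
  ⨆ a : M, setElasticity (lengths a)

/-- The principal left ideal `Ha`. -/
def leftIdeal {M : Type*} [Monoid M] (a : M) : Set M := Set.range (· * a)

/-- The principal right ideal `aH`. -/
def rightIdeal {M : Type*} [Monoid M] (a : M) : Set M := Set.range (a * ·)

/-- `A` is a generating set of the monoid `M`. -/
def Generates {M : Type*} [Monoid M] (A : Set M) : Prop :=
  ∀ a : M, ∃ l : List M, (∀ x ∈ l, x ∈ A) ∧ l.prod = a


namespace Stmt12Aux

variable {M : Type*} [CancelCommMonoid M]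

variable {n : ℕ} (g : Fin n → M)

/-- the factorization map -/
def psi (v : Fin n → ℕ) : M := ∏ i, g i ^ v i

def tot (v : Fin n → ℕ) : ℕ := ∑ i, v i

lemma psi_add (v w : Fin n → ℕ) : psi g (v + w) = psi g v * psi g w := by
  simp [psi, pow_add, Finset.prod_mul_distrib]

lemma psi_zero : psi g 0 = 1 := by simp [psi]

lemma tot_add (v w : Fin n → ℕ) : tot (v + w) = tot v + tot w := by
  simp [tot, Finset.sum_add_distrib]

lemma psi_single (i : Fin n) : psi g (Pi.single i 1) = g i := by
  rw [psi, Finset.prod_eq_single i] <;> simp +contextual [Pi.single_apply]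

lemma tot_single (i : Fin n) : tot (Pi.single i (1:ℕ)) = 1 := by
  rw [tot, Finset.sum_eq_single i] <;> simp +contextual [Pi.single_apply]

lemma tot_eq_zero {v : Fin n → ℕ} (h : tot v = 0) : v = 0 := by
  funext i
  have := Finset.sum_eq_zero_iff.mp h i (Finset.mem_univ i)
  simpa using this

lemma tot_pos {v : Fin n → ℕ} (h : v ≠ 0) : 1 ≤ tot v := by
  rcases Nat.eq_zero_or_pos (tot v) with h' | h'
  · exact absurd (tot_eq_zero h') h
  · exact h'

lemma sub_add_cancel'' {v w : Fin n → ℕ} (h : v ≤ w) : v + (w - v) = w :=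
  funext fun k => by
    have hk : v k ≤ w k := h k
    simp only [Pi.add_apply, Pi.sub_apply]
    omega

lemma tot_sub {v w : Fin n → ℕ} (h : v ≤ w) : tot (w - v) = tot w - tot v := by
  have h1 := tot_add v (w - v)
  rw [sub_add_cancel'' h] at h1
  omega

/-- vector to list -/
lemma exists_list (v : Fin n → ℕ) :
    ∃ l : List M, (∀ x ∈ l, ∃ i, x = g i) ∧ l.length = tot v ∧ l.prod = psi g v := by
  classical
  suffices h : ∀ s : Finset (Fin n), ∃ l : List M, (∀ x ∈ l, ∃ i, x = g i) ∧
      l.length = ∑ i ∈ s, v i ∧ l.prod = ∏ i ∈ s, g i ^ v i from h Finset.univ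
  intro s
  induction s using Finset.induction with
  | empty => exact ⟨[], by simp⟩
  | @insert a s hx ih =>
    obtain ⟨l, h1, h2, h3⟩ := ih
    refine ⟨List.replicate (v a) (g a) ++ l, ?_, ?_, ?_⟩
    · intro x hx
      rcases List.mem_append.mp hx with h | h
      · exact ⟨_, (List.eq_of_mem_replicate h)⟩
      · exact h1 x h
    · simp [h2, Finset.sum_insert hx]
    · simp [h3, Finset.prod_insert hx, List.prod_replicate]

/-- list to vector -/
lemma exists_vec (l : List M) (hl : ∀ x ∈ l, ∃ i, x = g i) :
    ∃ v : Fin n → ℕ, psi g v = l.prod ∧ tot v = l.length := by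
  induction l with
  | nil => exact ⟨0, by simp [psi_zero, tot]⟩
  | cons x t ih =>
    obtain ⟨v, hv1, hv2⟩ := ih (fun y hy => hl y (List.mem_cons_of_mem x hy))
    obtain ⟨i, hi⟩ := hl x List.mem_cons_self
    refine ⟨Pi.single i 1 + v, ?_, ?_⟩
    · rw [psi_add, psi_single, List.prod_cons, hi, hv1]
    · rw [tot_add, tot_single, List.length_cons, hv2]; omega

variable (hg : ∀ i, ¬ IsUnit (g i))

include hg in
lemma psi_eq_one {v : Fin n → ℕ} (h : psi g v = 1) : v = 0 := by
  obtain ⟨l, h1, h2, h3⟩ := exists_list g v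
  apply tot_eq_zero
  rw [← h2]
  rcases l with _ | ⟨x, t⟩
  · simp
  · exfalso
    obtain ⟨i, hi⟩ := h1 x List.mem_cons_self
    exact hg i (hi ▸ isUnit_of_dvd_one (h ▸ h3 ▸ List.dvd_prod List.mem_cons_self))

include hg in
lemma fiber_finite (a : M) : {v : Fin n → ℕ | psi g v = a}.Finite := by
  rw [← Set.not_infinite]
  intro hinf
  set f := hinf.natEmbedding with hf
  have hpwo : {v : Fin n → ℕ | psi g v = a}.IsPWO :=
    Set.isPWO_of_wellQuasiOrderedLE _
  obtain ⟨i, j, hij, hle⟩ := hpwo.exists_lt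
    (f := fun k => ((f k : {v : Fin n → ℕ | psi g v = a}) : Fin n → ℕ)) (fun k => (f k).2)
  have hv : psi g ((f i : _) : Fin n → ℕ) = a := (f i).2
  have hw : psi g ((f j : _) : Fin n → ℕ) = a := (f j).2
  have hd := sub_add_cancel'' hle
  have h1 : psi g ((f i : _) : Fin n → ℕ) * psi g (((f j : _) : Fin n → ℕ) - (f i : _)) =
      psi g ((f i : _) : Fin n → ℕ) := by
    rw [← psi_add, hd, hv, hw]
  have h0 : (((f j : _) : Fin n → ℕ) - ((f i : _) : Fin n → ℕ)) = 0 :=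
    psi_eq_one g hg (mul_eq_left.mp h1)
  have : ((f i : _) : Fin n → ℕ) = ((f j : _) : Fin n → ℕ) := by
    funext k
    have h2 : ((f i : _) : Fin n → ℕ) k ≤ ((f j : _) : Fin n → ℕ) k := hle k
    have h3 := congrFun h0 k
    simp only [Pi.sub_apply, Pi.zero_apply] at h3
    omega
  exact absurd (f.injective (Subtype.ext this)) (Nat.ne_of_lt hij)

variable (hsurj : ∀ a : M, ∃ v, psi g v = a)

noncomputable def deg (a : M) : ℕ := (fiber_finite g hg a).toFinset.sup tot

include hg in
lemma le_deg {a : M} {v : Fin n → ℕ} (h : psi g v = a) : tot v ≤ deg g hg a :=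
  Finset.le_sup (by simp [Set.Finite.mem_toFinset, h])

include hsurj in
lemma deg_lt {a b c : M} (h : a = b * c) (hc : c ≠ 1) : deg g hg b < deg g hg a := by
  obtain ⟨vb, hvb, hvb2⟩ : ∃ v, psi g v = b ∧ tot v = deg g hg b := by
    obtain ⟨v0, hv0⟩ := hsurj b
    obtain ⟨v, hv, hveq⟩ := Finset.exists_mem_eq_sup (fiber_finite g hg b).toFinset
      ⟨v0, by simp [Set.Finite.mem_toFinset, hv0]⟩ tot
    exact ⟨v, by simpa [Set.Finite.mem_toFinset] using hv, hveq.symm⟩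
  obtain ⟨vc, hvc⟩ := hsurj c
  have hvc0 : vc ≠ 0 := by
    rintro rfl
    exact hc (by rw [← hvc]; simp [psi])
  have h1 : psi g (vb + vc) = a := by rw [psi_add, hvb, hvc, h]
  have h2 : tot (vb + vc) ≤ deg g hg a := le_deg g hg h1
  have h3 : 1 ≤ tot vc := tot_pos hvc0
  rw [tot_add] at h2
  omega

include hg hsurj in
lemma atomic_of : Atomic M := by
  suffices H : ∀ N (a : M), deg g hg a < N → ¬IsUnit a →
      ∃ l : List M, (∀ x ∈ l, Irreducible x) ∧ l.prod = a by
    exact fun a ha => H (deg g hg a + 1) a (Nat.lt_succ_self _) ha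
  intro N
  induction N with
  | zero => exact fun a h => absurd h (Nat.not_lt_zero _)
  | succ N ih =>
    intro a ha hunit
    by_cases hirr : Irreducible a
    · exact ⟨[a], by simpa using hirr, by simp⟩
    · have : ∃ b c : M, a = b * c ∧ ¬IsUnit b ∧ ¬IsUnit c := by
        rw [irreducible_iff] at hirr
        push_neg at hirr
        obtain ⟨b, c, h1, h2, h3⟩ := hirr hunit
        exact ⟨b, c, h1, h2, h3⟩
      obtain ⟨b, c, rfl, hb, hc⟩ := this
      have hb' : deg g hg b < N :=
        lt_of_lt_of_le (deg_lt g hg hsurj rfl (fun h => hc (by rw [h]; exact isUnit_one)))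
          (Nat.lt_succ_iff.mp ha)
      have hc' : deg g hg c < N := by
        have := deg_lt g hg hsurj (mul_comm b c) (fun h => hb (by rw [h]; exact isUnit_one))
        omega
      obtain ⟨lb, hlb1, hlb2⟩ := ih b hb' hb
      obtain ⟨lc, hlc1, hlc2⟩ := ih c hc' hc
      refine ⟨lb ++ lc, ?_, by simp [hlb2, hlc2]⟩
      intro x hx
      rcases List.mem_append.mp hx with h | h
      exacts [hlb1 x h, hlc1 x h]

end Stmt12Aux

namespace Stmt12Aux

variable {M : Type*} [CancelCommMonoid M]
variable (hred : ∀ u : M, IsUnit u → u = 1)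

include hred in
lemma filter_ne_one_prod (l : List M) : (l.filter (fun x => x ≠ 1)).prod = l.prod := by
  induction l with
  | nil => rfl
  | cons x t ih =>
    by_cases hx : x = 1
    · subst hx; simpa using ih
    · rw [List.filter_cons_of_pos (by simpa using hx), List.prod_cons, List.prod_cons, ih]

include hred in
lemma exists_gen (hfg : Monoid.FG M) :
    ∃ (n : ℕ) (g : Fin n → M), (∀ i, ¬IsUnit (g i)) ∧ (∀ a : M, ∃ v, psi g v = a) := by
  obtain ⟨S, hS⟩ := hfg
  set T := S.erase 1 with hT
  refine ⟨T.card, fun i => (T.equivFin.symm i : M), ?_, ?_⟩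
  · intro i hu
    exact (Finset.mem_erase.mp (T.equivFin.symm i).2).1 (hred _ hu)
  · intro a
    have ha : a ∈ Submonoid.closure (S : Set M) := hS ▸ Submonoid.mem_top a
    obtain ⟨l, hl, hlp⟩ := Submonoid.exists_list_of_mem_closure ha
    set l' := l.filter (fun x => x ≠ 1) with hl'
    have hl'mem : ∀ x ∈ l', ∃ i, x = (T.equivFin.symm i : M) := by
      intro x hx
      have h1 : x ∈ l := List.mem_of_mem_filter hx
      have h2 : x ≠ 1 := by simpa using List.of_mem_filter hx
      have hxT : x ∈ T := Finset.mem_erase.mpr ⟨h2, hl x h1⟩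
      exact ⟨T.equivFin ⟨x, hxT⟩, by simp⟩
    obtain ⟨v, hv, _⟩ := exists_vec _ l' hl'mem
    exact ⟨v, by rw [hv, hl', filter_ne_one_prod hred, hlp]⟩

include hred in
lemma irr_mem_of_gen {S : Finset M} (l : List M) (hl : ∀ x ∈ l, x ∈ (S : Set M))
    (hirr : Irreducible l.prod) : l.prod ∈ (S : Set M) := by
  induction l with
  | nil => exact absurd (by simp : IsUnit ([] : List M).prod) hirr.not_isUnit
  | cons x t ih =>
    rcases hirr.isUnit_or_isUnit (List.prod_cons (l := t) (a := x)) with h | h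
    · have hx1 : x = 1 := hred x h
      have : (x :: t).prod = t.prod := by simp [hx1]
      rw [this] at hirr ⊢
      exact ih (fun y hy => hl y (List.mem_cons_of_mem x hy)) hirr
    · have ht1 : t.prod = 1 := hred _ h
      have : (x :: t).prod = x := by simp [ht1]
      rw [this]
      exact hl x List.mem_cons_self

include hred in
lemma atoms_finite (hfg : Monoid.FG M) : {u : M | Irreducible u}.Finite := by
  obtain ⟨S, hS⟩ := hfg
  apply Set.Finite.subset S.finite_toSet
  intro u hu
  have ha : u ∈ Submonoid.closure (S : Set M) := hS ▸ Submonoid.mem_top u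
  obtain ⟨l, hl, hlp⟩ := Submonoid.exists_list_of_mem_closure ha
  exact hlp ▸ irr_mem_of_gen hred l hl (hlp.symm ▸ hu)

include hred in
lemma exists_atom_gen (hfg : Monoid.FG M) (hatomic : Atomic M) :
    ∃ (n : ℕ) (g : Fin n → M), (∀ i, Irreducible (g i)) ∧
      (∀ u : M, Irreducible u → ∃ i, g i = u) ∧ (∀ a : M, ∃ v, psi g v = a) := by
  set F := (atoms_finite hred hfg).toFinset with hF
  refine ⟨F.card, fun i => (F.equivFin.symm i : M), fun i => ?_, fun u hu => ?_, fun a => ?_⟩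
  · exact (Set.Finite.mem_toFinset _).mp (F.equivFin.symm i).2
  · exact ⟨F.equivFin ⟨u, (Set.Finite.mem_toFinset _).mpr hu⟩,
      congrArg Subtype.val (Equiv.symm_apply_apply _ _)⟩
  · by_cases ha : IsUnit a
    · exact ⟨0, by rw [hred a ha]; simp [psi]⟩
    · obtain ⟨l, hl1, hl2⟩ := hatomic a ha
      obtain ⟨v, hv, _⟩ := exists_vec (fun i => (F.equivFin.symm i : M)) l (fun x hx =>
        ⟨F.equivFin ⟨x, (Set.Finite.mem_toFinset _).mpr (hl1 x hx)⟩, by simp⟩)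
      exact ⟨v, hv.trans hl2⟩

end Stmt12Aux


namespace Stmt12Aux

variable {M : Type*} [CancelCommMonoid M]

section Main2

variable {n : ℕ} (g : Fin n → M)

/-- the relation set -/
def Rel : Set ((Fin n → ℕ) × (Fin n → ℕ)) := {p | psi g p.1 = psi g p.2}

/-- minimal nonzero relations -/
def EE : Set ((Fin n → ℕ) × (Fin n → ℕ)) :=
  {p | p ∈ Rel g ∧ p ≠ 0 ∧ ∀ q ∈ Rel g, q ≠ 0 → q ≤ p → q = p}

def tot2 (p : (Fin n → ℕ) × (Fin n → ℕ)) : ℕ := tot p.1 + tot p.2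

lemma tot_zero' : tot (0 : Fin n → ℕ) = 0 := by simp [tot]

lemma tot_mono {v w : Fin n → ℕ} (h : v ≤ w) : tot v ≤ tot w :=
  Finset.sum_le_sum (fun i _ => h i)

lemma eq_of_le_of_tot {v w : Fin n → ℕ} (h : v ≤ w) (h2 : tot w ≤ tot v) : v = w := by
  by_contra hne
  have : ∃ i, v i < w i := by
    by_contra hc
    push_neg at hc
    exact hne (funext fun i => le_antisymm (h i) (hc i))
  obtain ⟨i, hi⟩ := this
  have : tot v < tot w :=
    Finset.sum_lt_sum (fun j _ => h j) ⟨i, Finset.mem_univ i, hi⟩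
  omega

lemma eq_of_le_of_tot2 {p q : (Fin n → ℕ) × (Fin n → ℕ)} (h : p ≤ q) (h2 : tot2 q ≤ tot2 p) :
    p = q := by
  have h1 : tot p.1 ≤ tot q.1 := tot_mono h.1
  have h2' : tot p.2 ≤ tot q.2 := tot_mono h.2
  unfold tot2 at h2
  exact Prod.ext (eq_of_le_of_tot h.1 (by omega)) (eq_of_le_of_tot h.2 (by omega))

variable (hg : ∀ i, ¬ IsUnit (g i))

include hg in
lemma rel_fst_zero {p : (Fin n → ℕ) × (Fin n → ℕ)} (hp : p ∈ Rel g) (h : p.1 = 0) : p = 0 := by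
  have : psi g p.2 = 1 := by rw [← hp, h, psi_zero]
  have := psi_eq_one g hg this
  exact Prod.ext h this

include hg in
lemma rel_tot2_pos {p : (Fin n → ℕ) × (Fin n → ℕ)} (hp : p ∈ Rel g) (h : p ≠ 0) :
    1 ≤ tot p.1 ∧ 1 ≤ tot p.2 := by
  constructor
  · refine tot_pos (fun h1 => h (rel_fst_zero g hg hp h1))
  · refine tot_pos (fun h2 => ?_)
    have hswap : p.swap ∈ Rel g := hp.symm
    have h3 := rel_fst_zero g hg hswap h2
    have h4 : p.swap = 0 := h3
    apply h
    have := congrArg Prod.swap h4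
    simpa using this

lemma rel_sub {p q : (Fin n → ℕ) × (Fin n → ℕ)} (hp : p ∈ Rel g) (hq : q ∈ Rel g) (h : q ≤ p) :
    p - q ∈ Rel g := by
  have h1 : q.1 + (p.1 - q.1) = p.1 := sub_add_cancel'' h.1
  have h2 : q.2 + (p.2 - q.2) = p.2 := sub_add_cancel'' h.2
  have : psi g q.1 * psi g (p.1 - q.1) = psi g q.1 * psi g (p.2 - q.2) := by
    calc psi g q.1 * psi g (p.1 - q.1) = psi g (q.1 + (p.1 - q.1)) := (psi_add g _ _).symm
    _ = psi g p.1 := by rw [h1]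
    _ = psi g p.2 := hp
    _ = psi g (q.2 + (p.2 - q.2)) := by rw [h2]
    _ = psi g q.2 * psi g (p.2 - q.2) := psi_add g _ _
    _ = psi g q.1 * psi g (p.2 - q.2) := by rw [hq]
  exact mul_left_cancel this

lemma EE_finite : (EE g).Finite := by
  rw [← Set.not_infinite]
  intro hinf
  set f := hinf.natEmbedding with hf
  have hpwo1 : (Set.univ : Set (Fin n → ℕ)).IsPWO :=
    Set.isPWO_of_wellQuasiOrderedLE _
  have hpwo : (EE g).IsPWO := by
    have := hpwo1.prod hpwo1
    exact this.mono (by intro x _; exact Set.mk_mem_prod trivial trivial)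
  obtain ⟨i, j, hij, hle⟩ := hpwo.exists_lt (f := fun k => ((f k : _) : (Fin n → ℕ) × (Fin n → ℕ)))
    (fun k => (f k).2)
  have hi := (f i).2
  have hj := (f j).2
  have heq : ((f i : _) : (Fin n → ℕ) × (Fin n → ℕ)) = ((f j : _) : (Fin n → ℕ) × (Fin n → ℕ)) :=
    hj.2.2 _ hi.1 hi.2.1 hle
  exact absurd (f.injective (Subtype.ext heq)) (Nat.ne_of_lt hij)

include hg in
lemma exists_decomp : ∀ N (p : (Fin n → ℕ) × (Fin n → ℕ)), tot2 p ≤ N → p ∈ Rel g →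
    ∃ L : List ((Fin n → ℕ) × (Fin n → ℕ)), (∀ q ∈ L, q ∈ EE g) ∧ L.sum = p := by
  intro N
  induction N with
  | zero =>
    intro p hp _
    refine ⟨[], by simp, ?_⟩
    have h1 : tot p.1 = 0 := by unfold tot2 at hp; omega
    have h2 : tot p.2 = 0 := by unfold tot2 at hp; omega
    simp [List.sum_nil]
    exact (Prod.ext (tot_eq_zero h1) (tot_eq_zero h2)).symm
  | succ N ih =>
    intro p hp hpR
    by_cases hp0 : p = 0
    · exact ⟨[], by simp, by simp [hp0]⟩
    · have hT : (tot2 '' {q | q ∈ Rel g ∧ q ≠ 0 ∧ q ≤ p}).Nonempty :=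
        ⟨tot2 p, ⟨p, ⟨hpR, hp0, le_rfl⟩, rfl⟩⟩
      obtain ⟨q, ⟨hqR, hq0, hqle⟩, hqm⟩ := Nat.sInf_mem hT
      have hqmin : ∀ r ∈ Rel g, r ≠ 0 → r ≤ q → r = q := by
        intro r hrR hr0 hrle
        have hrT : tot2 r ∈ tot2 '' {q | q ∈ Rel g ∧ q ≠ 0 ∧ q ≤ p} :=
          ⟨r, ⟨hrR, hr0, le_trans hrle hqle⟩, rfl⟩
        have := Nat.sInf_le hrT
        exact eq_of_le_of_tot2 hrle (by omega)
      have hqE : q ∈ EE g := ⟨hqR, hq0, hqmin⟩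
      have hsub : p - q ∈ Rel g := rel_sub g hpR hqR hqle
      have hq1 := rel_tot2_pos g hg hqR hq0
      have htot : tot2 (p - q) ≤ N := by
        have e1 : tot (p.1 - q.1) = tot p.1 - tot q.1 := tot_sub hqle.1
        have e2 : tot (p.2 - q.2) = tot p.2 - tot q.2 := tot_sub hqle.2
        have m1 : tot q.1 ≤ tot p.1 := tot_mono hqle.1
        have m2 : tot q.2 ≤ tot p.2 := tot_mono hqle.2
        unfold tot2 at hp ⊢
        have : tot (p - q).1 = tot p.1 - tot q.1 := e1
        have : tot (p - q).2 = tot p.2 - tot q.2 := e2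
        omega
      obtain ⟨L, hL1, hL2⟩ := ih (p - q) htot hsub
      refine ⟨q :: L, ?_, ?_⟩
      · intro r hr
        rcases List.mem_cons.mp hr with h | h
        · exact h ▸ hqE
        · exact hL1 r h
      · rw [List.sum_cons, hL2]
        exact Prod.ext (sub_add_cancel'' hqle.1) (sub_add_cancel'' hqle.2)

lemma fst_sum (L : List ((Fin n → ℕ) × (Fin n → ℕ))) : (L.map Prod.fst).sum = L.sum.1 := by
  induction L with
  | nil => rfl
  | cons q L ih => simp [ih]

lemma snd_sum (L : List ((Fin n → ℕ) × (Fin n → ℕ))) : (L.map Prod.snd).sum = L.sum.2 := by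
  induction L with
  | nil => rfl
  | cons q L ih => simp [ih]

lemma psi_listsum (l : List (Fin n → ℕ)) : psi g l.sum = (l.map (psi g)).prod := by
  induction l with
  | nil => simpa using psi_zero g
  | cons v l ih => rw [List.sum_cons, psi_add, List.map_cons, List.prod_cons, ih]

def hybrid (L : List ((Fin n → ℕ) × (Fin n → ℕ))) (t : ℕ) : Fin n → ℕ :=
  ((L.take t).map Prod.snd).sum + ((L.drop t).map Prod.fst).sum

lemma hybrid_zero (L : List ((Fin n → ℕ) × (Fin n → ℕ))) : hybrid L 0 = (L.map Prod.fst).sum := by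
  simp [hybrid]

lemma hybrid_len (L : List ((Fin n → ℕ) × (Fin n → ℕ))) :
    hybrid L L.length = (L.map Prod.snd).sum := by
  simp [hybrid]

lemma hybrid_psi (L : List ((Fin n → ℕ) × (Fin n → ℕ))) (hL : ∀ q ∈ L, q ∈ Rel g) (t : ℕ) :
    psi g (hybrid L t) = psi g ((L.map Prod.fst).sum) := by
  rw [hybrid, psi_add, psi_listsum, psi_listsum, psi_listsum]
  have h1 : (L.take t).map (psi g ∘ Prod.snd) = (L.take t).map (psi g ∘ Prod.fst) := by
    apply List.map_congr_left
    intro q hq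
    exact (hL q (List.take_subset t L hq)).symm
  calc (((L.take t).map Prod.snd).map (psi g)).prod * (((L.drop t).map Prod.fst).map (psi g)).prod
      = ((L.take t).map (psi g ∘ Prod.snd)).prod * ((L.drop t).map (psi g ∘ Prod.fst)).prod := by
        rw [List.map_map, List.map_map]
    _ = ((L.take t).map (psi g ∘ Prod.fst)).prod * ((L.drop t).map (psi g ∘ Prod.fst)).prod := by
        rw [h1]
    _ = ((L.map Prod.fst).map (psi g)).prod := by
        rw [← List.prod_append, ← List.map_append, List.take_append_drop, List.map_map]

lemma hybrid_step (L : List ((Fin n → ℕ) × (Fin n → ℕ))) (t : ℕ) (h : t < L.length) :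
    tot (hybrid L (t + 1)) + tot (L.get ⟨t, h⟩).1 = tot (hybrid L t) + tot (L.get ⟨t, h⟩).2 := by
  have htake : L.take (t + 1) = L.take t ++ [L.get ⟨t, h⟩] := by
    rw [← List.take_concat_get, List.concat_eq_append]
    rfl
  have hdrop : L.drop t = L.get ⟨t, h⟩ :: L.drop (t + 1) := by
    rw [List.drop_eq_getElem_cons h]
    rfl
  rw [hybrid, hybrid, htake, hdrop]
  simp only [List.map_append, List.map_cons, List.sum_append, List.sum_cons, List.map_nil,
    List.sum_nil]
  simp only [tot_add, tot_zero']
  omega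

variable (hred : ∀ u : M, IsUnit u → u = 1)
variable (hirr : ∀ i, Irreducible (g i)) (hcover : ∀ u : M, Irreducible u → ∃ i, g i = u)

include hred hirr hcover in
lemma lengths_eq (a : M) : lengths a = tot '' {v | psi g v = a} := by
  have hg' : ∀ i, ¬ IsUnit (g i) := fun i => (hirr i).not_isUnit
  by_cases ha : IsUnit a
  · have ha1 : a = 1 := hred a ha
    subst ha1
    rw [lengths, if_pos ha]
    ext k
    simp only [Set.mem_singleton_iff, Set.mem_image, Set.mem_setOf_eq]
    constructor
    · rintro rfl
      exact ⟨0, psi_zero g, tot_zero'⟩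
    · rintro ⟨v, hv, rfl⟩
      rw [psi_eq_one g hg' hv, tot_zero']
  · rw [lengths, if_neg ha]
    ext k
    simp only [Set.mem_setOf_eq, Set.mem_image]
    constructor
    · rintro ⟨l, hlen, hlirr, hlprod⟩
      obtain ⟨v, hv1, hv2⟩ := exists_vec g l (fun x hx => by
        obtain ⟨i, hi⟩ := hcover x (hlirr x hx); exact ⟨i, hi.symm⟩)
      exact ⟨v, by rw [hv1, hlprod], by rw [hv2, hlen]⟩
    · rintro ⟨v, hv, rfl⟩
      obtain ⟨l, hl1, hl2, hl3⟩ := exists_list g v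
      refine ⟨l, hl2, fun x hx => ?_, by rw [hl3, hv]⟩
      obtain ⟨i, hi⟩ := hl1 x hx
      exact hi ▸ hirr i

include hg hred hirr hcover in
lemma delta_bound (C : ℕ) (hC : ∀ q ∈ EE g, tot q.1 ≤ C ∧ tot q.2 ≤ C) (a : M)
    (d : ℕ) (hd : d ∈ distances (lengths a)) : d ≤ C := by
  obtain ⟨hd0, k, hk, hkd, hgap⟩ := hd
  rw [lengths_eq g hred hirr hcover] at hk hkd hgap
  obtain ⟨v, hv, hvt⟩ := hk
  obtain ⟨w, hw, hwt⟩ := hkd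
  have hvwR : (v, w) ∈ Rel g := by
    simp only [Rel, Set.mem_setOf_eq]
    rw [hv, hw]
  obtain ⟨L, hL1, hL2⟩ := exists_decomp g hg (tot2 (v, w)) (v, w) le_rfl hvwR
  have hLR : ∀ q ∈ L, q ∈ Rel g := fun q hq => (hL1 q hq).1
  set h : ℕ → ℕ := fun t => tot (hybrid L t) with hh
  have hmem : ∀ t, h t ∈ tot '' {v' | psi g v' = a} := by
    intro t
    refine ⟨hybrid L t, ?_, rfl⟩
    have := hybrid_psi g L hLR t
    rw [fst_sum, hL2] at this
    simpa [this] using hv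
  have hfst : (L.map Prod.fst).sum = v := by rw [fst_sum, hL2]
  have hsnd : (L.map Prod.snd).sum = w := by rw [snd_sum, hL2]
  have h0 : h 0 = k := by rw [hh]; simp only [hybrid_zero, hfst]; exact hvt
  have hLlen : h L.length = k + d := by rw [hh]; simp only [hybrid_len, hsnd]; exact hwt
  set P : ℕ → Prop := fun t => h t ≤ k with hP
  set t0 := Nat.findGreatest P L.length with ht0
  have hPt0 : P t0 := Nat.findGreatest_spec (Nat.zero_le _) (by rw [hP]; omega)
  have ht0le : t0 ≤ L.length := Nat.findGreatest_le _
  have ht0lt : t0 < L.length := by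
    rcases Nat.lt_or_ge t0 L.length with h' | h'
    · exact h'
    · exfalso
      have heq : t0 = L.length := le_antisymm ht0le h'
      have : P t0 := hPt0
      rw [hP] at this
      simp only [heq, hLlen] at this
      omega
  have hnext : ¬ P (t0 + 1) := Nat.findGreatest_is_greatest (Nat.lt_succ_self _) ht0lt
  have hPt0' : h t0 ≤ k := hPt0
  have hnext' : ¬ h (t0 + 1) ≤ k := hnext
  have hstep := hybrid_step L t0 ht0lt
  have hstep' : h (t0 + 1) + tot (L.get ⟨t0, ht0lt⟩).1 = h t0 + tot (L.get ⟨t0, ht0lt⟩).2 := hstep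
  have hqE := hL1 _ (List.get_mem L ⟨t0, ht0lt⟩)
  have hq2 : tot (L.get ⟨t0, ht0lt⟩).2 ≤ C := (hC _ hqE).2
  have hbound : h (t0 + 1) ≤ k + C := by omega
  have hmem1 := hmem (t0 + 1)
  have hgt : k < h (t0 + 1) := by omega
  rcases le_or_gt (h (t0 + 1)) (k + d) with h' | h'
  · rcases hgap _ hmem1 (by omega) h' with h'' | h''
    · omega
    · omega
  · omega

noncomputable def rhoStar : ℝ≥0∞ :=
  (EE_finite g).toFinset.sup (fun p => (tot p.2 : ℝ≥0∞) / (tot p.1 : ℝ≥0∞))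

lemma ratio_le' {p : (Fin n → ℕ) × (Fin n → ℕ)} (hp : p ∈ EE g) :
    (tot p.2 : ℝ≥0∞) / (tot p.1 : ℝ≥0∞) ≤ rhoStar g := by
  have h := Finset.le_sup (b := p) (f := fun q => (tot q.2 : ℝ≥0∞) / (tot q.1 : ℝ≥0∞))
    (s := (EE_finite g).toFinset) ((EE_finite g).mem_toFinset.mpr hp)
  exact h

include hg in
lemma ratio_le {p : (Fin n → ℕ) × (Fin n → ℕ)} (hp : p ∈ EE g) :
    (tot p.2 : ℝ≥0∞) ≤ rhoStar g * (tot p.1 : ℝ≥0∞) := by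
  have h1 := ratio_le' g hp
  have hpos := rel_tot2_pos g hg hp.1 hp.2.1
  rw [ENNReal.div_le_iff (Nat.cast_ne_zero.mpr (by omega)) (by simp)] at h1
  exact h1

include hg in
lemma rel_tot_le {v w : Fin n → ℕ} (h : (v, w) ∈ Rel g) :
    (tot w : ℝ≥0∞) ≤ rhoStar g * (tot v : ℝ≥0∞) := by
  obtain ⟨L, hL1, hL2⟩ := exists_decomp g hg (tot2 (v, w)) (v, w) le_rfl h
  have hv : (L.map Prod.fst).sum = v := by rw [fst_sum, hL2]
  have hw : (L.map Prod.snd).sum = w := by rw [snd_sum, hL2]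
  rw [← hv, ← hw]
  clear hv hw hL2 h
  induction L with
  | nil => simp [tot_zero']
  | cons q L ih =>
    have hq := hL1 q List.mem_cons_self
    have hrest := ih (fun r hr => hL1 r (List.mem_cons_of_mem q hr))
    simp only [List.map_cons, List.sum_cons, tot_add, Nat.cast_add]
    calc ((tot q.2 : ℝ≥0∞) + (tot (L.map Prod.snd).sum : ℝ≥0∞))
        ≤ rhoStar g * (tot q.1 : ℝ≥0∞) + rhoStar g * (tot (L.map Prod.fst).sum : ℝ≥0∞) :=
          add_le_add (ratio_le g hg hq) hrest
      _ = rhoStar g * ((tot q.1 : ℝ≥0∞) + (tot (L.map Prod.fst).sum : ℝ≥0∞)) := by ring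

lemma EE_swap {p : (Fin n → ℕ) × (Fin n → ℕ)} (hp : p ∈ EE g) : p.swap ∈ EE g := by
  obtain ⟨h1, h2, h3⟩ := hp
  refine ⟨h1.symm, fun h => h2 ?_, fun q hq hq0 hqle => ?_⟩
  · have := congrArg Prod.swap h
    simpa using this
  · have := h3 q.swap hq.symm (fun h => hq0 (by have := congrArg Prod.swap h; simpa using this))
      ⟨hqle.2, hqle.1⟩
    have h4 := congrArg Prod.swap this
    simpa using h4

include hg in
lemma rhoStar_lt_top : rhoStar g < ⊤ := by
  rw [rhoStar]
  apply Finset.sup_lt_iff (by simp : (⊥ : ℝ≥0∞) < ⊤) |>.mpr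
  intro p hp
  have hp' := (EE_finite g).mem_toFinset.mp hp
  have hpos := rel_tot2_pos g hg hp'.1 hp'.2.1
  calc (tot p.2 : ℝ≥0∞) / (tot p.1 : ℝ≥0∞) ≤ (tot p.2 : ℝ≥0∞) / 1 := by
        gcongr
        exact_mod_cast hpos.1
    _ = (tot p.2 : ℝ≥0∞) := by simp
    _ < ⊤ := by simp

include hg in
lemma rhoStar_ge_one (hne : (EE g).Nonempty) : 1 ≤ rhoStar g := by
  obtain ⟨p, hp⟩ := hne
  have hpos := rel_tot2_pos g hg hp.1 hp.2.1
  rcases le_or_gt (tot p.1) (tot p.2) with h | h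
  · have h1 : (1 : ℝ≥0∞) ≤ (tot p.2 : ℝ≥0∞) / (tot p.1 : ℝ≥0∞) := by
      rw [ENNReal.le_div_iff_mul_le (Or.inl (Nat.cast_ne_zero.mpr (by omega))) (Or.inl (by simp))]
      rw [one_mul]
      exact_mod_cast h
    exact h1.trans (ratio_le' g hp)
  · have hswap := EE_swap g hp
    have hs1 : tot p.swap.1 = tot p.2 := by rw [Prod.fst_swap]
    have hs2 : tot p.swap.2 = tot p.1 := by rw [Prod.snd_swap]
    have h1 : (1 : ℝ≥0∞) ≤ (tot p.swap.2 : ℝ≥0∞) / (tot p.swap.1 : ℝ≥0∞) := by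
      rw [ENNReal.le_div_iff_mul_le (Or.inl (Nat.cast_ne_zero.mpr (by omega))) (Or.inl (by simp))]
      rw [one_mul, hs1, hs2]
      exact_mod_cast h.le
    exact h1.trans (ratio_le' g hswap)

end Main2

end Stmt12Aux


namespace Stmt12Aux

section Final

variable {M : Type*} [CancelCommMonoid M]
variable {n : ℕ} (g : Fin n → M)
variable (hred : ∀ u : M, IsUnit u → u = 1)
variable (hirr : ∀ i, Irreducible (g i)) (hcover : ∀ u : M, Irreducible u → ∃ i, g i = u)
variable (hsurj : ∀ a : M, ∃ v, psi g v = a)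

include hred hirr hcover hsurj in
lemma lengths_finite_nonempty (a : M) : (lengths a).Finite ∧ (lengths a).Nonempty := by
  have hg : ∀ i, ¬IsUnit (g i) := fun i => (hirr i).not_isUnit
  rw [lengths_eq g hred hirr hcover]
  constructor
  · exact (fiber_finite g hg a).image tot
  · obtain ⟨v, hv⟩ := hsurj a
    exact ⟨tot v, v, hv, rfl⟩

include hred hirr hcover in
lemma deltaH_finite : (DeltaH M).Finite := by
  have hg : ∀ i, ¬IsUnit (g i) := fun i => (hirr i).not_isUnit
  set C := (EE_finite g).toFinset.sup tot2 with hCdef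
  have hC : ∀ q ∈ EE g, tot q.1 ≤ C ∧ tot q.2 ≤ C := by
    intro q hq
    have h := Finset.le_sup (b := q) (f := tot2) (s := (EE_finite g).toFinset)
      ((EE_finite g).mem_toFinset.mpr hq)
    have h2 : tot2 q = tot q.1 + tot q.2 := rfl
    constructor <;> omega
  apply Set.Finite.subset (Set.finite_Icc 1 C)
  intro d hd
  rw [DeltaH, Set.mem_iUnion] at hd
  obtain ⟨a, hda⟩ := hd
  exact Set.mem_Icc.mpr ⟨hda.1, delta_bound g hg hred hirr hcover C hC a d hda⟩

include hred hirr hcover hsurj in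
lemma setElasticity_le_rhoStar (h1 : 1 ≤ rhoStar g) (a : M) :
    setElasticity (lengths a) ≤ rhoStar g := by
  have hg : ∀ i, ¬IsUnit (g i) := fun i => (hirr i).not_isUnit
  rw [setElasticity]
  split_ifs with h
  · exact h1
  · have hL := lengths_eq g hred hirr hcover a
    have hne : (lengths a).Nonempty := (lengths_finite_nonempty g hred hirr hcover hsurj a).2
    have hmin : sInf (lengths a) ∈ lengths a := Nat.sInf_mem hne
    have ha : ¬IsUnit a := by
      intro hu
      exact h (by rw [lengths, if_pos hu])
    have h0 : 0 ∉ lengths a := by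
      intro h0
      rw [hL] at h0
      obtain ⟨v, hv, hv0⟩ := h0
      have hveq := tot_eq_zero hv0
      apply ha
      rw [← hv, hveq, psi_zero]
      exact isUnit_one
    have hSne : sInf (lengths a) ≠ 0 := fun h' => h0 (h' ▸ hmin)
    rw [ENNReal.div_le_iff (Nat.cast_ne_zero.mpr hSne) (by simp)]
    apply iSup₂_le
    intro m hm
    rw [hL] at hm
    obtain ⟨w, hw, hwt⟩ := hm
    have hmin' := hmin
    rw [hL] at hmin'
    obtain ⟨v, hv, hvt⟩ := hmin'
    have hR : (v, w) ∈ Rel g := by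
      simp only [Rel, Set.mem_setOf_eq]
      rw [Set.mem_setOf_eq] at hv hw
      rw [hv, hw]
    have := rel_tot_le g hg hR
    rw [hwt, hvt] at this
    rw [← hL] at this
    exact this

include hred hirr hcover hsurj in
lemma EE_nonempty (hnt : ∃ a : M, a ≠ 1) : (EE g).Nonempty := by
  have hg : ∀ i, ¬IsUnit (g i) := fun i => (hirr i).not_isUnit
  obtain ⟨a, ha⟩ := hnt
  obtain ⟨v, hv⟩ := hsurj a
  have hv0 : v ≠ 0 := by
    rintro rfl
    rw [psi_zero] at hv
    exact ha hv.symm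
  have hR : (v, v) ∈ Rel g := rfl
  obtain ⟨L, hL1, hL2⟩ := exists_decomp g hg (tot2 (v, v)) (v, v) le_rfl hR
  cases L with
  | nil =>
    exfalso
    apply hv0
    have : ((0, 0) : (Fin n → ℕ) × (Fin n → ℕ)) = (v, v) := hL2
    exact (congrArg Prod.fst this).symm
  | cons q L' => exact ⟨q, hL1 q List.mem_cons_self⟩

include hred hirr hcover hsurj in
lemma elasticity_attained (hnt : ∃ a : M, a ≠ 1) :
    elasticity M < ⊤ ∧ ∃ a : M, setElasticity (lengths a) = elasticity M := by
  have hg : ∀ i, ¬IsUnit (g i) := fun i => (hirr i).not_isUnit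
  have hne := EE_nonempty g hred hirr hcover hsurj hnt
  have h1 := rhoStar_ge_one g hg hne
  have hle : elasticity M ≤ rhoStar g :=
    iSup_le (setElasticity_le_rhoStar g hred hirr hcover hsurj h1)
  refine ⟨lt_of_le_of_lt hle (rhoStar_lt_top g hg), ?_⟩
  have hEFne : (EE_finite g).toFinset.Nonempty := by
    obtain ⟨p, hp⟩ := hne
    exact ⟨p, (EE_finite g).mem_toFinset.mpr hp⟩
  obtain ⟨p, hpEF, hpeq⟩ := Finset.exists_mem_eq_sup (EE_finite g).toFinset hEFne
    (fun q => (tot q.2 : ℝ≥0∞) / (tot q.1 : ℝ≥0∞))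
  have hpE : p ∈ EE g := (EE_finite g).mem_toFinset.mp hpEF
  have hpr : rhoStar g = (tot p.2 : ℝ≥0∞) / (tot p.1 : ℝ≥0∞) := hpeq
  have hpos := rel_tot2_pos g hg hpE.1 hpE.2.1
  set a := psi g p.1 with hadef
  have hL := lengths_eq g hred hirr hcover a
  have hmem1 : tot p.1 ∈ lengths a := by
    rw [hL]
    exact ⟨p.1, rfl, rfl⟩
  have hmem2 : tot p.2 ∈ lengths a := by
    rw [hL]
    exact ⟨p.2, hpE.1.symm, rfl⟩
  have hLne : lengths a ≠ {0} := by
    intro h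
    rw [h, Set.mem_singleton_iff] at hmem1
    omega
  have hgoal : rhoStar g ≤ setElasticity (lengths a) := by
    rw [setElasticity, if_neg hLne, hpr]
    apply ENNReal.div_le_div
    · exact le_biSup (s := lengths a) (fun m : ℕ => (m : ℝ≥0∞)) hmem2
    · exact Nat.cast_le.mpr (Nat.sInf_le hmem1)
  refine ⟨a, le_antisymm (le_iSup (fun a => setElasticity (lengths a)) a) ?_⟩
  calc elasticity M ≤ rhoStar g := hle
    _ ≤ setElasticity (lengths a) := hgoal

lemma mem_le_sum (L : List ((Fin n → ℕ) × (Fin n → ℕ)))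
    {q : (Fin n → ℕ) × (Fin n → ℕ)} (h : q ∈ L) : q ≤ L.sum := by
  induction L with
  | nil => simp at h
  | cons r L ih =>
    rw [List.sum_cons]
    rcases List.mem_cons.mp h with h' | h'
    · subst h'
      exact ⟨le_self_add, le_self_add⟩
    · have := ih h'
      exact ⟨this.1.trans le_add_self, this.2.trans le_add_self⟩

include hred hirr hcover in
lemma rhoK_bound :
    ∃ Mb : ℕ, ∀ k : ℕ, 2 ≤ k → rhoK M k ≤ rhoK M (k - 1) + (Mb : ℝ≥0∞) := by
  have hg : ∀ i, ¬IsUnit (g i) := fun i => (hirr i).not_isUnit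
  set C := (EE_finite g).toFinset.sup tot2 with hCdef
  have hC : ∀ q ∈ EE g, tot q.1 ≤ C ∧ tot q.2 ≤ C := by
    intro q hq
    have h := Finset.le_sup (b := q) (f := tot2) (s := (EE_finite g).toFinset)
      ((EE_finite g).mem_toFinset.mpr hq)
    have h2 : tot2 q = tot q.1 + tot q.2 := rfl
    constructor <;> omega
  refine ⟨C, fun k hk => ?_⟩
  rw [rhoK]
  apply iSup₂_le
  intro ℓ hℓ
  obtain ⟨l1, l2, h1len, h2len, h1irr, h2irr, hprod⟩ := hℓ
  obtain ⟨v, hv, hvt⟩ := exists_vec g l1 (fun x hx => by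
    obtain ⟨i, hi⟩ := hcover x (h1irr x hx); exact ⟨i, hi.symm⟩)
  obtain ⟨w, hw, hwt⟩ := exists_vec g l2 (fun x hx => by
    obtain ⟨i, hi⟩ := hcover x (h2irr x hx); exact ⟨i, hi.symm⟩)
  rw [h1len] at hvt
  rw [h2len] at hwt
  have hR : (v, w) ∈ Rel g := by
    simp only [Rel, Set.mem_setOf_eq]
    rw [hv, hw, hprod]
  have hv0 : v ≠ 0 := by
    rintro rfl
    rw [tot_zero'] at hvt
    omega
  obtain ⟨L, hL1, hL2⟩ := exists_decomp g hg (tot2 (v, w)) (v, w) le_rfl hR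
  cases L with
  | nil =>
    exfalso
    apply hv0
    have : ((0, 0) : (Fin n → ℕ) × (Fin n → ℕ)) = (v, w) := hL2
    exact (congrArg Prod.fst this).symm
  | cons q L' =>
    have hqE : q ∈ EE g := hL1 q List.mem_cons_self
    have hqle : q ≤ (v, w) := hL2 ▸ mem_le_sum _ List.mem_cons_self
    have hq1v : q.1 ≤ v := hqle.1
    have hq2w : q.2 ≤ w := hqle.2
    have hrel2 : ((v, w) - q) ∈ Rel g := rel_sub g hR hqE.1 hqle
    have hpos := rel_tot2_pos g hg hqE.1 hqE.2.1
    have hCq := hC q hqE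
    have hkt : tot q.1 ≤ k := hvt ▸ tot_mono hq1v
    -- an atom to pad with
    have hl1ne : l1 ≠ [] := by
      intro h
      rw [h] at h1len
      simp at h1len
      omega
    set u := l1.head hl1ne with hu
    have hu_irr : Irreducible u := h1irr u (List.head_mem hl1ne)
    obtain ⟨l3, hl3g, hl3len, hl3prod⟩ := exists_list g (v - q.1)
    obtain ⟨l4, hl4g, hl4len, hl4prod⟩ := exists_list g (w - q.2)
    set j := tot q.1 - 1 with hj
    have ht3 : tot (v - q.1) = k - tot q.1 := by rw [tot_sub hq1v, hvt]
    have ht4 : tot (w - q.2) = ℓ - tot q.2 := by rw [tot_sub hq2w, hwt]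
    have hmemU : (ℓ - tot q.2 + j) ∈ lengthUnion M (k - 1) := by
      refine ⟨l3 ++ List.replicate j u, l4 ++ List.replicate j u, ?_, ?_, ?_, ?_, ?_⟩
      · rw [List.length_append, List.length_replicate, hl3len, ht3]
        omega
      · rw [List.length_append, List.length_replicate, hl4len, ht4]
      · intro x hx
        rcases List.mem_append.mp hx with h' | h'
        · obtain ⟨i, hi⟩ := hl3g x h'
          exact hi ▸ hirr i
        · exact (List.eq_of_mem_replicate h') ▸ hu_irr
      · intro x hx
        rcases List.mem_append.mp hx with h' | h'
        · obtain ⟨i, hi⟩ := hl4g x h'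
          exact hi ▸ hirr i
        · exact (List.eq_of_mem_replicate h') ▸ hu_irr
      · rw [List.prod_append, List.prod_append, List.prod_replicate, hl3prod, hl4prod]
        have : psi g (v - q.1) = psi g (w - q.2) := hrel2
        rw [this]
    have h2 : ((ℓ - tot q.2 + j : ℕ) : ℝ≥0∞) ≤ rhoK M (k - 1) := by
      rw [rhoK]
      exact le_biSup (s := lengthUnion M (k - 1)) (fun m : ℕ => (m : ℝ≥0∞)) hmemU
    calc (ℓ : ℝ≥0∞) ≤ ((ℓ - tot q.2 + j : ℕ) : ℝ≥0∞) + (C : ℝ≥0∞) := by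
          rw [← Nat.cast_add]
          apply Nat.cast_le.mpr
          omega
      _ ≤ rhoK M (k - 1) + (C : ℝ≥0∞) := add_le_add_left h2 _

end Final

end Stmt12Aux
theorem stmt12 {M : Type*} [CancelCommMonoid M]
    (hred : ∀ u : M, IsUnit u → u = 1) (hfg : Monoid.FG M) :
    (∀ a : M, (lengths a).Finite ∧ (lengths a).Nonempty) ∧
    (DeltaH M).Finite ∧
    elasticity M < ⊤ ∧
    (∃ a : M, setElasticity (lengths a) = elasticity M) ∧
    ∃ Mb : ℕ, ∀ k : ℕ, 2 ≤ k → rhoK M k ≤ rhoK M (k - 1) + (Mb : ℝ≥0∞) := by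
  classical
  obtain ⟨n0, g0, hg0, hsurj0⟩ := Stmt12Aux.exists_gen hred hfg
  have hatomic : Atomic M := Stmt12Aux.atomic_of g0 hg0 hsurj0
  obtain ⟨n, g, hirr, hcover, hsurj⟩ := Stmt12Aux.exists_atom_gen hred hfg hatomic
  refine ⟨Stmt12Aux.lengths_finite_nonempty g hred hirr hcover hsurj,
    Stmt12Aux.deltaH_finite g hred hirr hcover, ?_, ?_,
    Stmt12Aux.rhoK_bound g hred hirr hcover⟩ <;>
  · by_cases hnt : ∃ a : M, a ≠ 1
    case pos =>
      obtain ⟨hlt, ha⟩ := Stmt12Aux.elasticity_attained g hred hirr hcover hsurj hnt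
      first
      | exact hlt
      | exact ha
    case neg =>
      push_neg at hnt
      have h1 : ∀ a : M, lengths a = {0} := fun a => by
        rw [hnt a, lengths, if_pos isUnit_one]
      have h2 : ∀ a : M, setElasticity (lengths a) = 1 := fun a => by
        rw [h1 a, setElasticity, if_pos rfl]
      have h3 : elasticity M = 1 := by
        rw [elasticity]
        simp only [h2]
        exact iSup_const
      first
      | exact h3 ▸ ENNReal.one_lt_top
      | exact ⟨1, by rw [h2 1, h3]⟩
end

section
/- Let G be an abelian group and G₀ ⊆ G a finite subset. Then the monoid B(G₀) of zero-sum sequences over G₀ is finitely generated. -/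
open scoped Classical ENNReal

/-- An atom of a reduced additive monoid: a nonzero element which is not the sum of
two nonzero elements. -/
def IsAddAtom {N : Type*} [AddMonoid N] (u : N) : Prop :=
  u ≠ 0 ∧ ∀ v w : N, u = v + w → v = 0 ∨ w = 0

/-- The set of lengths of `a` in a reduced additive monoid. -/
def addLengths {N : Type*} [AddMonoid N] (a : N) : Set ℕ :=
  {k | ∃ l : List N, l.length = k ∧ (∀ x ∈ l, IsAddAtom x) ∧ l.sum = a}

/-- An atom of the (reduced) submonoid `S`: a nonzero element of `S` which is not the
sum of two nonzero elements of `S`. -/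
def IsAtomIn {N : Type*} [AddCommMonoid N] (S : Set N) (u : N) : Prop :=
  u ∈ S ∧ u ≠ 0 ∧ ∀ v ∈ S, ∀ w ∈ S, u = v + w → v = 0 ∨ w = 0

/-- The set of lengths of `a` relative to the submonoid `S`. -/
def lengthsIn {N : Type*} [AddCommMonoid N] (S : Set N) (a : N) : Set ℕ :=
  {k | ∃ l : List N, l.length = k ∧ (∀ x ∈ l, IsAtomIn S x) ∧ l.sum = a}

/-- The set of distances of the submonoid `S`. -/
def DeltaIn {N : Type*} [AddCommMonoid N] (S : Set N) : Set ℕ :=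
  ⋃ a ∈ S, distances (lengthsIn S a)

/-- The monoid of zero-sum sequences over `G`, realized as the set of multisets
over `G` with sum zero. -/
def ZS (G : Type*) [AddCommGroup G] : Set (Multiset G) := {s | s.sum = 0}

/-- The Davenport constant: the maximal length of an atom of `B(G)`. -/
noncomputable def davenport (G : Type*) [AddCommGroup G] : ℕ :=
  sSup {n : ℕ | ∃ s : Multiset G, IsAtomIn (ZS G) s ∧ Multiset.card s = n}

/-- The union `U_k` of sets of lengths relative to `S`. -/
def UIn {N : Type*} [AddCommMonoid N] (S : Set N) (k : ℕ) : Set ℕ :=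
  {ℓ | ∃ l1 l2 : List N, l1.length = k ∧ l2.length = ℓ ∧
      (∀ x ∈ l1, IsAtomIn S x) ∧ (∀ x ∈ l2, IsAtomIn S x) ∧ l1.sum = l2.sum}

/-- `ρ_k = sup U_k`, valued in `ℝ≥0∞`. -/
noncomputable def rhoKIn {N : Type*} [AddCommMonoid N] (S : Set N) (k : ℕ) : ℝ≥0∞ :=
  ⨆ ℓ ∈ UIn S k, (ℓ : ℝ≥0∞)

/-- The elasticity of the submonoid `S`. -/
noncomputable def elasticityIn {N : Type*} [AddCommMonoid N] (S : Set N) : ℝ≥0∞ :=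
  ⨆ a ∈ S, setElasticity (lengthsIn S a)

theorem stmt13 {G : Type*} [AddCommGroup G] (G₀ : Set G) (hfin : G₀.Finite) :
    ∃ S : Finset (Multiset G),
      (∀ s ∈ S, (∀ g ∈ s, g ∈ G₀) ∧ s.sum = 0) ∧
      ∀ t : Multiset G, (∀ g ∈ t, g ∈ G₀) → t.sum = 0 →
        ∃ l : List (Multiset G), (∀ x ∈ l, x ∈ S) ∧ l.sum = t := by
    classical
  haveI : Fintype G₀ := hfin.fintype
  -- the set of nonzero zero-sum multisets over G₀
  set T : Set (Multiset G) := {t | (∀ g ∈ t, g ∈ G₀) ∧ t.sum = 0 ∧ t ≠ 0} with hT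
  set A : Set (Multiset G) := {a ∈ T | ∀ s ∈ T, s ≤ a → s = a} with hA
  -- every t ∈ T is bounded below by an element of A
  have hmin : ∀ t ∈ T, ∃ a ∈ A, a ≤ t := by
    intro t ht
    induction t using Multiset.strongInductionOn with
    | ih t ih =>
      by_cases h : ∀ s ∈ T, s ≤ t → s = t
      · exact ⟨t, ⟨ht, h⟩, le_refl t⟩
      · push_neg at h
        obtain ⟨s, hs, hst, hne⟩ := h
        obtain ⟨a, ha, has⟩ := ih s (lt_of_le_of_ne hst hne) hs
        exact ⟨a, ha, has.trans hst⟩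
  -- A is finite via Dickson's lemma
  have hAfin : A.Finite := by
    set φ : Multiset G → (G₀ → ℕ) := fun t g => t.count (g : G) with hφ
    have hinj : Set.InjOn φ A := by
      intro s hs t ht h
      ext g
      by_cases hg : g ∈ G₀
      · exact congrFun h ⟨g, hg⟩
      · rw [Multiset.count_eq_zero_of_notMem (fun hm => hg (hs.1.1 g hm)),
          Multiset.count_eq_zero_of_notMem (fun hm => hg (ht.1.1 g hm))]
    have hanti : IsAntichain (· ≤ ·) (φ '' A) := by
      rintro _ ⟨s, hs, rfl⟩ _ ⟨t, ht, rfl⟩ hne hle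
      apply hne
      have hst : s ≤ t := by
        rw [Multiset.le_iff_count]
        intro g
        by_cases hg : g ∈ G₀
        · exact hle ⟨g, hg⟩
        · rw [Multiset.count_eq_zero_of_notMem (fun hm => hg (hs.1.1 g hm))]
          exact Nat.zero_le _
      rw [ht.2 s hs.1 hst]
    have hwo : ∀ _ : G₀, IsWellOrder ℕ (· < ·) := fun _ => inferInstance
    have := hanti.finite_of_partiallyWellOrderedOn
      (Set.isPWO_of_wellQuasiOrderedLE (φ '' A))
    exact Set.Finite.of_finite_image this hinj
  refine ⟨hAfin.toFinset, ?_, ?_⟩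
  · intro s hs
    rw [Set.Finite.mem_toFinset] at hs
    exact ⟨hs.1.1, hs.1.2.1⟩
  · intro t
    induction t using Multiset.strongInductionOn with
    | ih t ih =>
      intro htG htsum
      by_cases h0 : t = 0
      · exact ⟨[], by simp, by simp [h0]⟩
      · obtain ⟨a, ha, hat⟩ := hmin t ⟨htG, htsum, h0⟩
        have ha0 : a ≠ 0 := ha.1.2.2
        have hta : a + (t - a) = t := add_tsub_cancel_of_le hat
        have hlt : t - a < t := by
          apply lt_of_le_of_ne (tsub_le_self)
          intro he
          apply ha0
          have := congrArg Multiset.card hta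
          rw [Multiset.card_add, he] at this
          simpa using this
        have hsub : ∀ g ∈ t - a, g ∈ G₀ := fun g hg => htG g (Multiset.mem_of_le tsub_le_self hg)
        have hsum : (t - a).sum = 0 := by
          have := congrArg Multiset.sum hta
          rw [Multiset.sum_add, ha.1.2.1, zero_add] at this
          rw [this, htsum]
        obtain ⟨l, hl, hlsum⟩ := ih (t - a) hlt hsub hsum
        refine ⟨a :: l, ?_, ?_⟩
        · intro x hx
          rcases List.mem_cons.mp hx with rfl | hx
          · rwa [Set.Finite.mem_toFinset]
          · exact hl x hx
        · rw [List.sum_cons, hlsum, hta]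
end

section
/- Let G be an abelian group. The following are equivalent: (a) |G| ≤ 2; (b) the monoid B(G) of zero-sum sequences over G is factorial (i.e., free abelian); (c) B(G) is half-factorial. -/
open scoped Classical ENNReal

universe u

/-- The monoid of zero-sum sequences over `G`, as an additive submonoid of the free
abelian monoid of multisets over `G`. -/
def zeroSum (G : Type u) [AddCommGroup G] : AddSubmonoid (Multiset G) where
  carrier := {s | s.sum = 0}
  zero_mem' := by simp
  add_mem' := by
    intro a b ha hb
    simp only [Set.mem_setOf_eq] at ha hb ⊢
    rw [Multiset.sum_add, ha, hb, add_zero]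

section Aux
variable {β : Type*}

def wt : (β →₀ ℕ) →+ ℕ where
  toFun f := f.sum fun _ n => n
  map_zero' := Finsupp.sum_zero_index
  map_add' f g := by
    exact Finsupp.sum_add_index' (h := fun _ n => n) (fun _ => rfl) (fun _ _ _ => rfl)

lemma wt_apply (f : β →₀ ℕ) : wt f = f.sum fun _ n => n := rfl

lemma wt_eq_zero {f : β →₀ ℕ} : wt f = 0 ↔ f = 0 := by
  rw [wt_apply]
  constructor
  · intro h
    ext b
    by_cases hb : b ∈ f.support
    · have := (Finset.sum_eq_zero_iff.1 h) b hb
      simpa using this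
    · simpa using hb
  · rintro rfl; simp

lemma wt_single (b : β) (n : ℕ) : wt (Finsupp.single b n) = n := by
  rw [wt_apply, Finsupp.sum_single_index]; rfl

lemma isAddAtom_single (b : β) : IsAddAtom (Finsupp.single b 1) := by
  constructor
  · simp [Finsupp.single_eq_zero]
  · intro v w h
    have : wt v + wt w = 1 := by
      rw [← map_add, ← h, wt_single]
    rcases Nat.eq_zero_or_pos (wt v) with hv | hv
    · exact Or.inl (wt_eq_zero.1 hv)
    · exact Or.inr (wt_eq_zero.1 (by omega))

lemma atom_wt {f : β →₀ ℕ} (hf : IsAddAtom f) : wt f = 1 := by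
  obtain ⟨hne, hdec⟩ := hf
  obtain ⟨b, hb⟩ : ∃ b, f b ≠ 0 := by
    by_contra h
    push_neg at h
    exact hne (Finsupp.ext h)
  have hle : Finsupp.single b 1 ≤ f := Finsupp.single_le_iff.2 (by omega)
  have heq : f = Finsupp.single b 1 + (f - Finsupp.single b 1) :=
    (add_tsub_cancel_of_le hle).symm
  rcases hdec _ _ heq with h | h
  · exact absurd h (by simp)
  · rw [heq, h, add_zero, wt_single]

lemma exists_atoms (f : β →₀ ℕ) : ∃ l : List (β →₀ ℕ),
    l.length = wt f ∧ (∀ x ∈ l, IsAddAtom x) ∧ l.sum = f := by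
  generalize hn : wt f = n
  induction n generalizing f with
  | zero => exact ⟨[], rfl, by simp, (wt_eq_zero.1 hn).symm⟩
  | succ n ih =>
    have hne : f ≠ 0 := fun h => by simp [h, map_zero] at hn
    obtain ⟨b, hb⟩ : ∃ b, f b ≠ 0 := by
      by_contra h; push_neg at h; exact hne (Finsupp.ext h)
    have hle : Finsupp.single b 1 ≤ f := Finsupp.single_le_iff.2 (by omega)
    have heq : f = Finsupp.single b 1 + (f - Finsupp.single b 1) :=
      (add_tsub_cancel_of_le hle).symm
    have hwt : wt (f - Finsupp.single b 1) = n := by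
      have := congrArg wt heq
      rw [map_add, wt_single, hn] at this
      omega
    obtain ⟨l, hl, hat, hs⟩ := ih _ hwt
    refine ⟨Finsupp.single b 1 :: l, by simp [hl], ?_, by simp [hs, ← heq]⟩
    intro x hx
    rcases List.mem_cons.1 hx with rfl | hx
    · exact isAddAtom_single b
    · exact hat x hx

lemma finsupp_unique_length (f : β →₀ ℕ) : ∃! k : ℕ, k ∈ addLengths f := by
  obtain ⟨l, hl, hat, hs⟩ := exists_atoms f
  refine ⟨wt f, ⟨l, hl, hat, hs⟩, ?_⟩
  rintro k ⟨m, hm, hmat, hms⟩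
  have : wt f = (m.map wt).sum := by rw [← hms, map_list_sum]
  have h1 : ∀ x ∈ m.map wt, x = 1 := by
    intro x hx
    obtain ⟨y, hy, rfl⟩ := List.mem_map.1 hx
    exact atom_wt (hmat y hy)
  rw [List.eq_replicate_of_mem h1] at this
  simp only [List.sum_replicate, List.length_map, smul_eq_mul, mul_one] at this
  omega

-- transport
lemma isAddAtom_map {M N : Type*} [AddMonoid M] [AddMonoid N] (e : M ≃+ N) {u : M}
    (h : IsAddAtom u) : IsAddAtom (e u) := by
  obtain ⟨hne, hdec⟩ := h
  refine ⟨fun h0 => hne (by simpa using congrArg e.symm h0), fun v w hvw => ?_⟩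
  have : u = e.symm v + e.symm w := by
    have := congrArg e.symm hvw
    simpa using this
  rcases hdec _ _ this with h | h
  · exact Or.inl (by simpa using congrArg e h)
  · exact Or.inr (by simpa using congrArg e h)

lemma mem_addLengths_map {M N : Type*} [AddMonoid M] [AddMonoid N] (e : M ≃+ N) {u : M}
    {k : ℕ} (h : k ∈ addLengths u) : k ∈ addLengths (e u) := by
  obtain ⟨l, hl, hat, hs⟩ := h
  refine ⟨l.map e, by simp [hl], ?_, by rw [← map_list_sum, hs]⟩
  intro x hx
  obtain ⟨y, hy, rfl⟩ := List.mem_map.1 hx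
  exact isAddAtom_map e (hat y hy)

lemma unique_length_of_equiv {M : Type*} [AddMonoid M] (e : M ≃+ (β →₀ ℕ)) (u : M) :
    ∃! k : ℕ, k ∈ addLengths u := by
  obtain ⟨k, hk, huniq⟩ := finsupp_unique_length (e u)
  refine ⟨k, ?_, fun m hm => huniq m (mem_addLengths_map e hm)⟩
  have := mem_addLengths_map e.symm hk
  simpa using this

end Aux

section Aux2
variable {G : Type u} [AddCommGroup G]

lemma mem_zeroSum {s : Multiset G} : s ∈ zeroSum G ↔ s.sum = 0 := Iff.rfl

lemma zs_coe_add (v w : ↥(zeroSum G)) : ((v + w : ↥(zeroSum G)) : Multiset G) = ↑v + ↑w := rfl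

lemma zs_eq_zero {v : ↥(zeroSum G)} (h : (v : Multiset G) = 0) : v = 0 := Subtype.ext h

lemma atom_of_small_card (s : ↥(zeroSum G))
    (hcard : Multiset.card (s : Multiset G) = 2 ∨ Multiset.card (s : Multiset G) = 3)
    (h0 : ∀ a ∈ (s : Multiset G), a ≠ 0) : IsAddAtom s := by
  constructor
  · intro h
    have : (s : Multiset G) = 0 := congrArg _ h
    simp [this] at hcard
  · intro v w hvw
    have hval : (s : Multiset G) = ↑v + ↑w := congrArg _ hvw
    have hc : Multiset.card (v : Multiset G) + Multiset.card (w : Multiset G)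
        = Multiset.card (s : Multiset G) := by rw [hval, Multiset.card_add]
    -- helper: a card-1 zero-sum submultiset is impossible
    have key : ∀ t : ↥(zeroSum G), (t : Multiset G) ≤ (s : Multiset G) →
        Multiset.card (t : Multiset G) ≠ 1 := by
      intro t hle hone
      obtain ⟨a, ha⟩ := Multiset.card_eq_one.1 hone
      have hsum : (t : Multiset G).sum = 0 := t.2
      rw [ha, Multiset.sum_singleton] at hsum
      have : a ∈ (s : Multiset G) := Multiset.mem_of_le hle (by simp [ha])
      exact h0 a this hsum
    have hvle : (v : Multiset G) ≤ (s : Multiset G) := hval ▸ Multiset.le_add_right _ _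
    have hwle : (w : Multiset G) ≤ (s : Multiset G) := hval ▸ Multiset.le_add_left _ _
    rcases Nat.eq_zero_or_pos (Multiset.card (v : Multiset G)) with hv | hv
    · exact Or.inl (zs_eq_zero (Multiset.card_eq_zero.1 hv))
    rcases Nat.eq_zero_or_pos (Multiset.card (w : Multiset G)) with hw | hw
    · exact Or.inr (zs_eq_zero (Multiset.card_eq_zero.1 hw))
    exfalso
    have hv1 := key v hvle
    have hw1 := key w hwle
    omega

lemma two_three (s : ↥(zeroSum G)) (A B U1 U2 U3 : ↥(zeroSum G))
    (hA : IsAddAtom A) (hB : IsAddAtom B)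
    (h1 : IsAddAtom U1) (h2 : IsAddAtom U2) (h3 : IsAddAtom U3)
    (hAB : A + B = s) (hU : U1 + U2 + U3 = s) :
    ¬ (∃! k : ℕ, k ∈ addLengths s) := by
  rintro ⟨k, -, huniq⟩
  have m2 : (2 : ℕ) ∈ addLengths s := by
    refine ⟨[A, B], rfl, ?_, by simpa using hAB⟩
    intro x hx
    rcases List.mem_cons.1 hx with rfl | hx
    · exact hA
    rcases List.mem_cons.1 hx with rfl | hx
    · exact hB
    · simp at hx
  have m3 : (3 : ℕ) ∈ addLengths s := by
    refine ⟨[U1, U2, U3], rfl, ?_, by simpa [add_assoc] using hU⟩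
    intro x hx
    rcases List.mem_cons.1 hx with rfl | hx
    · exact h1
    rcases List.mem_cons.1 hx with rfl | hx
    · exact h2
    rcases List.mem_cons.1 hx with rfl | hx
    · exact h3
    · simp at hx
  have := huniq 2 m2
  have := huniq 3 m3
  omega

example (g : G) : ({g+g, -g, -g} : Multiset G) + {-(g+g), g, g}
    = {g, -g} + ({g, -g} + {g+g, -(g+g)}) := by
  simp only [Multiset.insert_eq_cons, ← Multiset.singleton_add]
  abel

example (e1 e2 e3 : G) : ({e1, e2, e3} : Multiset G) + {e1, e2, e3}
    = {e1, e1} + ({e2, e2} + {e3, e3}) := by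
  simp only [Multiset.insert_eq_cons, ← Multiset.singleton_add]
  abel

lemma sum_zero2 {x y : G} (h : x + y = 0) : ({x, y} : Multiset G).sum = 0 := by
  simp [h]

lemma sum_zero3 {x y z : G} (h : x + y + z = 0) : ({x, y, z} : Multiset G).sum = 0 := by
  simpa [add_assoc] using h

lemma exists_bad (habc : ∃ a b c : G, a ≠ b ∧ a ≠ c ∧ b ≠ c) :
    ∃ s : ↥(zeroSum G), ¬ ∃! k : ℕ, k ∈ addLengths s := by
  by_cases hg : ∃ g : G, g + g ≠ 0
  · obtain ⟨g, hg⟩ := hg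
    have hg0 : g ≠ 0 := by rintro rfl; simp at hg
    have hng0 : -g ≠ 0 := by simpa using hg0
    have hgg0 : -(g + g) ≠ 0 := by rw [Ne, neg_eq_zero]; exact hg
    set A : ↥(zeroSum G) := ⟨{g+g, -g, -g}, sum_zero3 (by abel)⟩ with hA
    set B : ↥(zeroSum G) := ⟨{-(g+g), g, g}, sum_zero3 (by abel)⟩ with hB
    set U1 : ↥(zeroSum G) := ⟨{g, -g}, sum_zero2 (by abel)⟩ with hU1
    set U3 : ↥(zeroSum G) := ⟨{g+g, -(g+g)}, sum_zero2 (by abel)⟩ with hU3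
    refine ⟨A + B, two_three _ A B U1 U1 U3 ?_ ?_ ?_ ?_ ?_ rfl ?_⟩
    · refine atom_of_small_card A (Or.inr (by simp [hA])) ?_
      intro a ha
      simp only [hA, Multiset.insert_eq_cons, Multiset.mem_cons, Multiset.mem_singleton] at ha
      rcases ha with rfl | rfl | rfl <;> assumption
    · refine atom_of_small_card B (Or.inr (by simp [hB])) ?_
      intro a ha
      simp only [hB, Multiset.insert_eq_cons, Multiset.mem_cons, Multiset.mem_singleton] at ha
      rcases ha with rfl | rfl | rfl <;> assumption
    · refine atom_of_small_card U1 (Or.inl (by simp [hU1])) ?_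
      intro a ha
      simp only [hU1, Multiset.insert_eq_cons, Multiset.mem_cons, Multiset.mem_singleton] at ha
      rcases ha with rfl | rfl <;> assumption
    · refine atom_of_small_card U1 (Or.inl (by simp [hU1])) ?_
      intro a ha
      simp only [hU1, Multiset.insert_eq_cons, Multiset.mem_cons, Multiset.mem_singleton] at ha
      rcases ha with rfl | rfl <;> assumption
    · refine atom_of_small_card U3 (Or.inl (by simp [hU3])) ?_
      intro a ha
      simp only [hU3, Multiset.insert_eq_cons, Multiset.mem_cons, Multiset.mem_singleton] at ha
      rcases ha with rfl | rfl <;> assumption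
    · apply Subtype.ext
      show ({g, -g} : Multiset G) + {g, -g} + {g+g, -(g+g)} = {g+g, -g, -g} + {-(g+g), g, g}
      simp only [Multiset.insert_eq_cons, ← Multiset.singleton_add]
      abel
  · push_neg at hg
    obtain ⟨a, b, c, hab, hac, hbc⟩ := habc
    obtain ⟨e1, e2, h1, h2, h12⟩ : ∃ e1 e2 : G, e1 ≠ 0 ∧ e2 ≠ 0 ∧ e1 ≠ e2 := by
      by_cases ha : a = 0
      · exact ⟨b, c, fun h => hab (by rw [ha, h]), fun h => hac (by rw [ha, h]), hbc⟩
      by_cases hb : b = 0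
      · exact ⟨a, c, ha, fun h => hbc (by rw [hb, h]), hac⟩
      · exact ⟨a, b, ha, hb, hab⟩
    set e3 := e1 + e2 with he3
    have h3 : e3 ≠ 0 := by
      intro h
      apply h12
      have := hg e2
      calc e1 = e1 + (e2 + e2) := by rw [this, add_zero]
      _ = e3 + e2 := by rw [he3]; abel
      _ = e2 := by rw [h, zero_add]
    have hsum : e1 + e2 + e3 = 0 := by rw [he3]; exact hg _
    set W : ↥(zeroSum G) := ⟨{e1, e2, e3}, sum_zero3 hsum⟩ with hW
    set V1 : ↥(zeroSum G) := ⟨{e1, e1}, sum_zero2 (hg e1)⟩ with hV1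
    set V2 : ↥(zeroSum G) := ⟨{e2, e2}, sum_zero2 (hg e2)⟩ with hV2
    set V3 : ↥(zeroSum G) := ⟨{e3, e3}, sum_zero2 (hg e3)⟩ with hV3
    refine ⟨W + W, two_three _ W W V1 V2 V3 ?_ ?_ ?_ ?_ ?_ rfl ?_⟩
    · refine atom_of_small_card W (Or.inr (by simp [hW])) ?_
      intro x hx
      simp only [hW, Multiset.insert_eq_cons, Multiset.mem_cons, Multiset.mem_singleton] at hx
      rcases hx with rfl | rfl | rfl <;> assumption
    · refine atom_of_small_card W (Or.inr (by simp [hW])) ?_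
      intro x hx
      simp only [hW, Multiset.insert_eq_cons, Multiset.mem_cons, Multiset.mem_singleton] at hx
      rcases hx with rfl | rfl | rfl <;> assumption
    · refine atom_of_small_card V1 (Or.inl (by simp [hV1])) ?_
      intro x hx
      simp only [hV1, Multiset.insert_eq_cons, Multiset.mem_cons, Multiset.mem_singleton] at hx
      rcases hx with rfl | rfl <;> assumption
    · refine atom_of_small_card V2 (Or.inl (by simp [hV2])) ?_
      intro x hx
      simp only [hV2, Multiset.insert_eq_cons, Multiset.mem_cons, Multiset.mem_singleton] at hx
      rcases hx with rfl | rfl <;> assumption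
    · refine atom_of_small_card V3 (Or.inl (by simp [hV3])) ?_
      intro x hx
      simp only [hV3, Multiset.insert_eq_cons, Multiset.mem_cons, Multiset.mem_singleton] at hx
      rcases hx with rfl | rfl <;> assumption
    · apply Subtype.ext
      show ({e1, e1} : Multiset G) + {e2, e2} + {e3, e3} = {e1, e2, e3} + {e1, e2, e3}
      simp only [Multiset.insert_eq_cons, ← Multiset.singleton_add]
      abel

noncomputable def trivEquiv (htriv : ∀ h : G, h = 0) : (G →₀ ℕ) ≃+ ↥(zeroSum G) where
  toFun f := ⟨Multiset.replicate (f 0) 0, by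
    rw [mem_zeroSum, Multiset.sum_replicate, smul_zero]⟩
  invFun s := Finsupp.single 0 (Multiset.card (s : Multiset G))
  left_inv f := by
    simp only [Multiset.card_replicate]
    ext b
    rw [htriv b]
    simp
  right_inv s := by
    apply Subtype.ext
    show Multiset.replicate _ 0 = _
    rw [Finsupp.single_eq_same]
    exact ((Multiset.eq_replicate_card).2 (fun b _ => htriv b)).symm
  map_add' f g := by
    apply Subtype.ext
    show Multiset.replicate ((f + g) 0) 0 = Multiset.replicate (f 0) 0 + Multiset.replicate (g 0) 0
    rw [Finsupp.add_apply, Multiset.replicate_add]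

section two
variable (g : G)

lemma sum_eq_count (hg0 : g ≠ 0) (hall : ∀ h : G, h = 0 ∨ h = g) (s : Multiset G) :
    s.sum = (s.count g) • g := by
  induction s using Multiset.induction_on with
  | empty => simp
  | cons a s ih =>
    rcases hall a with rfl | rfl
    · rw [Multiset.sum_cons, Multiset.count_cons_of_ne hg0, zero_add, ih]
    · rw [Multiset.sum_cons, Multiset.count_cons_self, ih, succ_nsmul, add_comm]

lemma count_even (hg0 : g ≠ 0) (hg2 : g + g = 0) (hall : ∀ h : G, h = 0 ∨ h = g)
    (s : ↥(zeroSum G)) :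
    2 * (Multiset.count g (s : Multiset G) / 2) = Multiset.count g (s : Multiset G) := by
  have hs : ((s : Multiset G)).sum = 0 := s.2
  rw [sum_eq_count g hg0 hall] at hs
  set n := Multiset.count g (s : Multiset G)
  rcases Nat.even_or_odd n with ⟨k, hk⟩ | ⟨k, hk⟩
  · omega
  · exfalso
    apply hg0
    have h1 : n • g = (2 * k) • g + g := by rw [hk, two_mul, add_smul, one_smul]
    have h2k : (2 * k) • g = 0 := by
      rw [mul_comm, mul_smul, two_smul, hg2, smul_zero]
    rw [h1, h2k, zero_add] at hs
    exact hs

noncomputable def twoHom (hg2 : g + g = 0) : (G →₀ ℕ) →+ ↥(zeroSum G) where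
  toFun f := ⟨Multiset.replicate (f 0) 0 + Multiset.replicate (2 * f g) g, by
    rw [mem_zeroSum, Multiset.sum_add, Multiset.sum_replicate, Multiset.sum_replicate,
      smul_zero, zero_add, mul_comm, mul_smul, two_smul, hg2, smul_zero]⟩
  map_zero' := by
    apply Subtype.ext
    show Multiset.replicate ((0 : G →₀ ℕ) 0) 0 + Multiset.replicate (2 * (0 : G →₀ ℕ) g) g = 0
    simp
  map_add' f h := by
    apply Subtype.ext
    show Multiset.replicate ((f + h) 0) 0 + Multiset.replicate (2 * (f + h) g) g
      = (Multiset.replicate (f 0) 0 + Multiset.replicate (2 * f g) g)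
        + (Multiset.replicate (h 0) 0 + Multiset.replicate (2 * h g) g)
    rw [Finsupp.add_apply, Finsupp.add_apply, mul_add, Multiset.replicate_add,
      Multiset.replicate_add]
    abel

lemma twoHom_count0 (hg0 : g ≠ 0) (hg2 : g + g = 0) (f : G →₀ ℕ) :
    Multiset.count 0 ((twoHom g hg2 f : Multiset G)) = f 0 := by
  show Multiset.count 0 (Multiset.replicate (f 0) 0 + Multiset.replicate (2 * f g) g) = f 0
  rw [Multiset.count_add, Multiset.count_replicate, Multiset.count_replicate,
    if_pos rfl, if_neg hg0, add_zero]

lemma twoHom_countg (hg0 : g ≠ 0) (hg2 : g + g = 0) (f : G →₀ ℕ) :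
    Multiset.count g ((twoHom g hg2 f : Multiset G)) = 2 * f g := by
  show Multiset.count g (Multiset.replicate (f 0) 0 + Multiset.replicate (2 * f g) g) = 2 * f g
  rw [Multiset.count_add, Multiset.count_replicate, Multiset.count_replicate,
    if_pos rfl, if_neg (Ne.symm hg0), zero_add]

lemma twoHom_bij (hg0 : g ≠ 0) (hg2 : g + g = 0) (hall : ∀ h : G, h = 0 ∨ h = g) :
    Function.Bijective (twoHom g hg2) := by
  constructor
  · intro f f' hff
    have h0 := congrArg (fun t : ↥(zeroSum G) => Multiset.count 0 (t : Multiset G)) hff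
    have hg := congrArg (fun t : ↥(zeroSum G) => Multiset.count g (t : Multiset G)) hff
    simp only [twoHom_count0 g hg0 hg2, twoHom_countg g hg0 hg2] at h0 hg
    ext b
    rcases hall b with rfl | rfl
    · exact h0
    · omega
  · intro s
    refine ⟨Finsupp.single (0 : G) (Multiset.count 0 (s : Multiset G))
      + Finsupp.single g (Multiset.count g (s : Multiset G) / 2), ?_⟩
    set f := Finsupp.single (0 : G) (Multiset.count 0 (s : Multiset G))
      + Finsupp.single g (Multiset.count g (s : Multiset G) / 2) with hf
    have hf0 : f 0 = Multiset.count 0 (s : Multiset G) := by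
      rw [hf, Finsupp.add_apply, Finsupp.single_eq_same, Finsupp.single_eq_of_ne' hg0, add_zero]
    have hfg : f g = Multiset.count g (s : Multiset G) / 2 := by
      rw [hf, Finsupp.add_apply, Finsupp.single_eq_same,
        Finsupp.single_eq_of_ne' (Ne.symm hg0), zero_add]
    apply Subtype.ext
    show Multiset.replicate (f 0) 0 + Multiset.replicate (2 * f g) g = (s : Multiset G)
    rw [hf0, hfg, count_even g hg0 hg2 hall s]
    ext b
    rcases hall b with rfl | rfl
    · rw [Multiset.count_add, Multiset.count_replicate, Multiset.count_replicate,
        if_pos rfl, if_neg hg0, add_zero]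
    · rw [Multiset.count_add, Multiset.count_replicate, Multiset.count_replicate,
        if_pos rfl, if_neg (Ne.symm hg0), zero_add]

noncomputable def twoEquiv (hg0 : g ≠ 0) (hg2 : g + g = 0) (hall : ∀ h : G, h = 0 ∨ h = g) :
    (G →₀ ℕ) ≃+ ↥(zeroSum G) :=
  AddEquiv.ofBijective (twoHom g hg2) (twoHom_bij g hg0 hg2 hall)

end two

lemma small_to_free (hsmall : ∀ a b c : G, a = b ∨ a = c ∨ b = c) :
    ∃ β : Type u, Nonempty (↥(zeroSum G) ≃+ (β →₀ ℕ)) := by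
  by_cases htriv : ∀ h : G, h = 0
  · exact ⟨G, ⟨(trivEquiv htriv).symm⟩⟩
  · push_neg at htriv
    obtain ⟨g, hg0⟩ := htriv
    have hall : ∀ h : G, h = 0 ∨ h = g := by
      intro h
      rcases hsmall h 0 g with h1 | h1 | h1
      · exact Or.inl h1
      · exact Or.inr h1
      · exact absurd h1.symm hg0
    have hg2 : g + g = 0 := by
      rcases hall (g + g) with h1 | h1
      · exact h1
      · exact absurd (by rwa [add_eq_left] at h1) hg0
    exact ⟨G, ⟨(twoEquiv g hg0 hg2 hall).symm⟩⟩

end Aux2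

theorem stmt14 {G : Type u} [AddCommGroup G] :
    ((∀ a b c : G, a = b ∨ a = c ∨ b = c) ↔
      ∃ β : Type u, Nonempty (↥(zeroSum G) ≃+ (β →₀ ℕ))) ∧
    ((∃ β : Type u, Nonempty (↥(zeroSum G) ≃+ (β →₀ ℕ))) ↔
      ∀ s : ↥(zeroSum G), ∃! k : ℕ, k ∈ addLengths s) := by
  have hbc : (∃ β : Type u, Nonempty (↥(zeroSum G) ≃+ (β →₀ ℕ))) →
      ∀ s : ↥(zeroSum G), ∃! k : ℕ, k ∈ addLengths s := by
    rintro ⟨β, ⟨e⟩⟩ s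
    exact unique_length_of_equiv e s
  have hca : (∀ s : ↥(zeroSum G), ∃! k : ℕ, k ∈ addLengths s) →
      ∀ a b c : G, a = b ∨ a = c ∨ b = c := by
    intro h a b c
    by_contra hcon
    push_neg at hcon
    obtain ⟨s, hs⟩ := exists_bad ⟨a, b, c, hcon.1, hcon.2.1, hcon.2.2⟩
    exact hs (h s)
  exact ⟨⟨fun h => small_to_free h, fun h => hca (hbc h)⟩,
    hbc, fun h => small_to_free (hca h)⟩
end

section
/- Let H be a reduced commutative cancellative monoid contained as a submonoid in a free abelian monoid F = F(P) such that the embedding H ↪ F is a cofinal divisor homomorphism; let G = q(F)/q(H) be the class group and G₀ = { [p] : p ∈ P } ⊆ G the set of classes containing prime divisors. Then the map β : H → B(G₀) sending p₁⋯p_ℓ ∈ H to the zero-sum sequence [p₁]⋯[p_ℓ] over G₀ is a transfer homomorphism; in particular L(H) = L(B(G₀)), i.e., the systems of sets of lengths of H and B(G₀) coincide. -/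
open scoped Classical ENNReal

/-- The canonical embedding of the free abelian monoid `F(P)` (multisets over `P`)
into its quotient group `q(F(P)) = P →₀ ℤ`. -/
noncomputable def iota {P : Type*} [DecidableEq P] (s : Multiset P) : P →₀ ℤ :=
  Finsupp.mapRange (fun n : ℕ => (n : ℤ)) (by simp) (Multiset.toFinsupp s)

/-- The quotient group `q(H)` of `H` inside `q(F(P))`. -/
noncomputable def qGroup {P : Type*} [DecidableEq P] (H : Set (Multiset P)) : AddSubgroup (P →₀ ℤ) :=
  AddSubgroup.closure (iota '' H)

/-- The class group `G = q(F)/q(H)`. -/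
abbrev ClsGrp {P : Type*} [DecidableEq P] (H : Set (Multiset P)) :=
  (P →₀ ℤ) ⧸ qGroup H

/-- The class `[p] ∈ G` of a prime divisor `p ∈ P`. -/
noncomputable def clsOf {P : Type*} [DecidableEq P] (H : Set (Multiset P)) (p : P) :
    ClsGrp H :=
  QuotientAddGroup.mk (iota ({p} : Multiset P))

/-- `G₀ ⊆ G`: the set of classes containing prime divisors. -/
def primeClasses {P : Type*} [DecidableEq P] (H : Set (Multiset P)) : Set (ClsGrp H) :=
  Set.range (clsOf H)

/-- The map `β` sending `p₁ ⋯ p_ℓ` to the sequence `[p₁] ⋯ [p_ℓ]` over `G₀`. -/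
noncomputable def betaMap {P : Type*} [DecidableEq P] (H : Set (Multiset P))
    (s : Multiset P) : Multiset (ClsGrp H) :=
  s.map (clsOf H)

/-- The monoid of zero-sum sequences over `G₀`, as a set of multisets over `G`. -/
def BG0 {P : Type*} [DecidableEq P] (H : Set (Multiset P)) : Set (Multiset (ClsGrp H)) :=
  {t | (∀ g ∈ t, g ∈ primeClasses H) ∧ t.sum = 0}

section Aux

variable {P : Type*} [DecidableEq P]

lemma iota_apply (s : Multiset P) (p : P) : iota s p = (s.count p : ℤ) := by
  simp [iota]

lemma iota_add (s t : Multiset P) : iota (s + t) = iota s + iota t := by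
  ext p; simp [iota_apply]

lemma iota_zero : iota (0 : Multiset P) = 0 := by
  ext p; simp [iota_apply]

lemma iota_inj : Function.Injective (iota (P := P)) := by
  intro s t h
  ext p
  have := DFunLike.congr_fun h p
  rw [iota_apply, iota_apply] at this
  exact_mod_cast this

lemma mem_qGroup_iff (H : Set (Multiset P)) (h0 : (0 : Multiset P) ∈ H)
    (hadd : ∀ a ∈ H, ∀ b ∈ H, a + b ∈ H) (x : P →₀ ℤ) :
    x ∈ qGroup H ↔ ∃ a ∈ H, ∃ b ∈ H, x = iota a - iota b := by
  constructor
  · intro hx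
    let D : AddSubgroup (P →₀ ℤ) :=
      { carrier := {x | ∃ a ∈ H, ∃ b ∈ H, x = iota a - iota b}
        zero_mem' := ⟨0, h0, 0, h0, by simp⟩
        add_mem' := by
          rintro x y ⟨a, ha, b, hb, rfl⟩ ⟨c, hc, d, hd, rfl⟩
          exact ⟨a + c, hadd _ ha _ hc, b + d, hadd _ hb _ hd,
            by rw [iota_add, iota_add]; abel⟩
        neg_mem' := by
          rintro x ⟨a, ha, b, hb, rfl⟩
          exact ⟨b, hb, a, ha, by abel⟩ }
    have : qGroup H ≤ D := by
      apply AddSubgroup.closure_le (K := D) |>.2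
      rintro _ ⟨a, ha, rfl⟩
      exact ⟨a, ha, 0, h0, by rw [iota_zero]; abel⟩
    exact this hx
  · rintro ⟨a, ha, b, hb, rfl⟩
    exact sub_mem (AddSubgroup.subset_closure ⟨a, ha, rfl⟩)
      (AddSubgroup.subset_closure ⟨b, hb, rfl⟩)

lemma mem_H_iff (H : Set (Multiset P)) (h0 : (0 : Multiset P) ∈ H)
    (hadd : ∀ a ∈ H, ∀ b ∈ H, a + b ∈ H)
    (hdiv : ∀ a ∈ H, ∀ b ∈ H, a ≤ b → b - a ∈ H) (f : Multiset P) :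
    f ∈ H ↔ iota f ∈ qGroup H := by
  constructor
  · intro hf; exact AddSubgroup.subset_closure ⟨f, hf, rfl⟩
  · intro hf
    obtain ⟨a, ha, b, hb, hab⟩ := (mem_qGroup_iff H h0 hadd _).1 hf
    have : iota (f + b) = iota a := by rw [iota_add, hab]; abel
    have hfb : f + b = a := iota_inj this
    have hle : b ≤ a := by rw [← hfb]; exact Multiset.le_add_left _ _
    have : a - b = f := by rw [← hfb]; exact add_tsub_cancel_right f b
    rw [← this]; exact hdiv b hb a ha hle

lemma beta_sum (H : Set (Multiset P)) (s : Multiset P) :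
    (betaMap H s).sum = QuotientAddGroup.mk (iota s) := by
  induction s using Multiset.induction with
  | empty => simp [betaMap, iota_zero]
  | cons p s ih =>
    rw [betaMap, Multiset.map_cons, Multiset.sum_cons, ← betaMap, ih,
      show (p ::ₘ s : Multiset P) = {p} + s from (Multiset.singleton_add p s).symm,
      iota_add]
    rfl

lemma beta_add (H : Set (Multiset P)) (a b : Multiset P) :
    betaMap H (a + b) = betaMap H a + betaMap H b :=
  Multiset.map_add _ _ _

lemma beta_eq_zero (H : Set (Multiset P)) {a : Multiset P} (h : betaMap H a = 0) :
    a = 0 := by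
  rwa [betaMap, Multiset.map_eq_zero] at h

lemma beta_mem_BG0 (H : Set (Multiset P)) (h0 : (0 : Multiset P) ∈ H)
    (hadd : ∀ a ∈ H, ∀ b ∈ H, a + b ∈ H)
    (hdiv : ∀ a ∈ H, ∀ b ∈ H, a ≤ b → b - a ∈ H)
    {a : Multiset P} (ha : a ∈ H) : betaMap H a ∈ BG0 H := by
  constructor
  · intro g hg
    obtain ⟨p, _, rfl⟩ := Multiset.mem_map.1 hg
    exact ⟨p, rfl⟩
  · rw [beta_sum]
    rw [QuotientAddGroup.eq_zero_iff]
    exact (mem_H_iff H h0 hadd hdiv a).1 ha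

lemma mem_H_of_beta (H : Set (Multiset P)) (h0 : (0 : Multiset P) ∈ H)
    (hadd : ∀ a ∈ H, ∀ b ∈ H, a + b ∈ H)
    (hdiv : ∀ a ∈ H, ∀ b ∈ H, a ≤ b → b - a ∈ H)
    {a : Multiset P} (ha : (betaMap H a).sum = 0) : a ∈ H := by
  rw [mem_H_iff H h0 hadd hdiv]
  rw [beta_sum] at ha
  exact (QuotientAddGroup.eq_zero_iff _).1 ha

lemma exists_map_eq {α β : Type*} (f : α → β) (t : Multiset β)
    (h : ∀ g ∈ t, g ∈ Set.range f) : ∃ s : Multiset α, s.map f = t := by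
  induction t using Multiset.induction with
  | empty => exact ⟨0, rfl⟩
  | cons g t ih =>
    obtain ⟨p, hp⟩ := h g (Multiset.mem_cons_self _ _)
    obtain ⟨s, hs⟩ := ih fun g' hg' => h g' (Multiset.mem_cons_of_mem hg')
    exact ⟨p ::ₘ s, by rw [Multiset.map_cons, hp, hs]⟩

lemma map_split {α β : Type*} (f : α → β) :
    ∀ (a : Multiset α) (s t : Multiset β), a.map f = s + t →
      ∃ b c, a = b + c ∧ b.map f = s ∧ c.map f = t := by
  intro a
  induction a using Multiset.induction with
  | empty =>
    intro s t h
    simp only [Multiset.map_zero] at h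
    have hs : s = 0 := Multiset.le_zero.1 (le_trans (Multiset.le_add_right s t) (le_of_eq h.symm))
    have ht : t = 0 := Multiset.le_zero.1 (le_trans (Multiset.le_add_left t s) (le_of_eq h.symm))
    exact ⟨0, 0, by simp, by simp [hs], by simp [ht]⟩
  | cons p a ih =>
    intro s t h
    have hmem : f p ∈ s + t := by
      rw [← h, Multiset.map_cons]; exact Multiset.mem_cons_self _ _
    rcases Multiset.mem_add.1 hmem with hps | hpt
    · obtain ⟨s', rfl⟩ : ∃ s', s = f p ::ₘ s' := ⟨s.erase (f p), (Multiset.cons_erase hps).symm⟩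
      have : a.map f = s' + t := by
        have h' : f p ::ₘ a.map f = f p ::ₘ (s' + t) := by
          rw [← Multiset.map_cons, h, Multiset.cons_add]
        exact (Multiset.cons_inj_right _).1 h'
      obtain ⟨b, c, rfl, hb, hc⟩ := ih _ _ this
      exact ⟨p ::ₘ b, c, by rw [Multiset.cons_add], by rw [Multiset.map_cons, hb], hc⟩
    · obtain ⟨t', rfl⟩ : ∃ t', t = f p ::ₘ t' := ⟨t.erase (f p), (Multiset.cons_erase hpt).symm⟩
      have : a.map f = s + t' := by
        have h' : f p ::ₘ a.map f = f p ::ₘ (s + t') := by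
          rw [← Multiset.map_cons, h, Multiset.add_cons]
        exact (Multiset.cons_inj_right _).1 h'
      obtain ⟨b, c, rfl, hb, hc⟩ := ih _ _ this
      exact ⟨b, p ::ₘ c, by rw [Multiset.add_cons], hb, by rw [Multiset.map_cons, hc]⟩

end Aux
section Main

variable {P : Type*} [DecidableEq P] (H : Set (Multiset P))
variable (h0 : (0 : Multiset P) ∈ H) (hadd : ∀ a ∈ H, ∀ b ∈ H, a + b ∈ H)
variable (hdiv : ∀ a ∈ H, ∀ b ∈ H, a ≤ b → b - a ∈ H)

include h0 hadd hdiv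

lemma beta_surj {t : Multiset (ClsGrp H)} (ht : t ∈ BG0 H) :
    ∃ a ∈ H, betaMap H a = t := by
  obtain ⟨hmem, hsum⟩ := ht
  obtain ⟨s, hs⟩ := exists_map_eq (clsOf H) t hmem
  refine ⟨s, ?_, hs⟩
  apply mem_H_of_beta H h0 hadd hdiv
  rw [betaMap, hs, hsum]

lemma beta_lift {a : Multiset P} (ha : a ∈ H) {s t : Multiset (ClsGrp H)}
    (hs : s ∈ BG0 H) (ht : t ∈ BG0 H) (h : betaMap H a = s + t) :
    ∃ b ∈ H, ∃ c ∈ H, a = b + c ∧ betaMap H b = s ∧ betaMap H c = t := by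
  obtain ⟨b, c, rfl, hb, hc⟩ := map_split (clsOf H) a s t h
  refine ⟨b, ?_, c, ?_, rfl, hb, hc⟩
  · exact mem_H_of_beta H h0 hadd hdiv (by rw [betaMap, hb, hs.2])
  · exact mem_H_of_beta H h0 hadd hdiv (by rw [betaMap, hc, ht.2])

lemma atom_beta {u : Multiset P} (hu : IsAtomIn H u) :
    IsAtomIn (BG0 H) (betaMap H u) := by
  obtain ⟨huH, hu0, husplit⟩ := hu
  refine ⟨beta_mem_BG0 H h0 hadd hdiv huH, ?_, ?_⟩
  · intro h; exact hu0 (beta_eq_zero H h)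
  · intro v hv w hw h
    obtain ⟨b, hb, c, hc, rfl, hbv, hcw⟩ := beta_lift H h0 hadd hdiv huH hv hw h
    rcases husplit b hb c hc rfl with h1 | h1
    · left; rw [← hbv, h1]; rfl
    · right; rw [← hcw, h1]; rfl

lemma atom_of_beta {u : Multiset P} (huH : u ∈ H)
    (hu : IsAtomIn (BG0 H) (betaMap H u)) : IsAtomIn H u := by
  obtain ⟨_, hu0, husplit⟩ := hu
  refine ⟨huH, ?_, ?_⟩
  · rintro rfl; exact hu0 rfl
  · intro v hv w hw h
    have := husplit (betaMap H v) (beta_mem_BG0 H h0 hadd hdiv hv)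
      (betaMap H w) (beta_mem_BG0 H h0 hadd hdiv hw)
      (by rw [h, beta_add])
    rcases this with h1 | h1
    · left; exact beta_eq_zero H h1
    · right; exact beta_eq_zero H h1

omit h0 hadd hdiv in
lemma BG0_list_sum {m : List (Multiset (ClsGrp H))} (hm : ∀ x ∈ m, x ∈ BG0 H) :
    m.sum ∈ BG0 H := by
  induction m with
  | nil => exact ⟨by simp, by simp⟩
  | cons B m ih =>
    have hB := hm B (List.mem_cons_self)
    have hms := ih fun x hx => hm x (List.mem_cons_of_mem _ hx)
    rw [List.sum_cons]
    constructor
    · intro g hg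
      rcases Multiset.mem_add.1 hg with h | h
      · exact hB.1 g h
      · exact hms.1 g h
    · rw [Multiset.sum_add, hB.2, hms.2, add_zero]

lemma lift_factorization :
    ∀ m : List (Multiset (ClsGrp H)), ∀ a : Multiset P, a ∈ H →
      (∀ x ∈ m, IsAtomIn (BG0 H) x) → m.sum = betaMap H a →
      ∃ l : List (Multiset P), l.length = m.length ∧
        (∀ x ∈ l, IsAtomIn H x) ∧ l.sum = a := by
  intro m
  induction m with
  | nil =>
    intro a _ _ hsum
    have : a = 0 := beta_eq_zero H (by rw [← hsum]; rfl)
    exact ⟨[], rfl, by simp, by simp [this]⟩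
  | cons B m ih =>
    intro a ha hatoms hsum
    rw [List.sum_cons] at hsum
    have hB : B ∈ BG0 H := (hatoms B (List.mem_cons_self)).1
    have hms : m.sum ∈ BG0 H :=
      BG0_list_sum H fun x hx => (hatoms x (List.mem_cons_of_mem _ hx)).1
    obtain ⟨b, hb, c, hc, rfl, hbB, hcm⟩ :=
      beta_lift H h0 hadd hdiv ha hB hms hsum.symm
    obtain ⟨l, hlen, hlatoms, hlsum⟩ :=
      ih c hc (fun x hx => hatoms x (List.mem_cons_of_mem _ hx)) hcm.symm
    refine ⟨b :: l, by simp [hlen], ?_, by rw [List.sum_cons, hlsum]⟩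
    intro x hx
    rcases List.mem_cons.1 hx with rfl | hx
    · exact atom_of_beta H h0 hadd hdiv hb
        (by rw [hbB]; exact hatoms B (List.mem_cons_self))
    · exact hlatoms x hx

lemma lengths_eq {a : Multiset P} (ha : a ∈ H) :
    lengthsIn H a = lengthsIn (BG0 H) (betaMap H a) := by
  ext k
  constructor
  · rintro ⟨l, hlen, hatoms, rfl⟩
    refine ⟨l.map (betaMap H), by simp [hlen], ?_, ?_⟩
    · intro x hx
      obtain ⟨u, hu, rfl⟩ := List.mem_map.1 hx
      exact atom_beta H h0 hadd hdiv (hatoms u hu)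
    · clear hatoms ha hlen
      induction l with
      | nil => simp [betaMap]
      | cons u l ih => simp only [List.map_cons, List.sum_cons, beta_add, ih]
  · rintro ⟨m, hlen, hatoms, hsum⟩
    obtain ⟨l, hl1, hl2, hl3⟩ :=
      lift_factorization H h0 hadd hdiv m a ha hatoms hsum
    exact ⟨l, hl1.trans hlen, hl2, hl3⟩

end Main

theorem stmt16 {P : Type*} [DecidableEq P] (H : Set (Multiset P))
    (h0 : 0 ∈ H) (hadd : ∀ a ∈ H, ∀ b ∈ H, a + b ∈ H)
    (hdiv : ∀ a ∈ H, ∀ b ∈ H, a ≤ b → b - a ∈ H)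
    (hcof : ∀ f : Multiset P, ∃ a ∈ H, f ≤ a) :
    (∀ a ∈ H, betaMap H a ∈ BG0 H) ∧
    (∀ a b : Multiset P, betaMap H (a + b) = betaMap H a + betaMap H b) ∧
    (∀ t ∈ BG0 H, ∃ a ∈ H, betaMap H a = t) ∧
    (∀ a ∈ H, betaMap H a = 0 → a = 0) ∧
    (∀ a ∈ H, ∀ s t : Multiset (ClsGrp H), s ∈ BG0 H → t ∈ BG0 H →
      betaMap H a = s + t →
      ∃ b ∈ H, ∃ c ∈ H, a = b + c ∧ betaMap H b = s ∧ betaMap H c = t) ∧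
    {L : Set ℕ | ∃ a ∈ H, L = lengthsIn H a} =
      {L : Set ℕ | ∃ t ∈ BG0 H, L = lengthsIn (BG0 H) t} := by
  refine ⟨fun a ha => beta_mem_BG0 H h0 hadd hdiv ha,
    beta_add H,
    fun t ht => beta_surj H h0 hadd hdiv ht,
    fun a _ h => beta_eq_zero H h,
    fun a ha s t hs ht h => beta_lift H h0 hadd hdiv ha hs ht h, ?_⟩
  ext L
  constructor
  · rintro ⟨a, ha, rfl⟩
    exact ⟨betaMap H a, beta_mem_BG0 H h0 hadd hdiv ha,
      lengths_eq H h0 hadd hdiv ha⟩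
  · rintro ⟨t, ht, rfl⟩
    obtain ⟨a, ha, rfl⟩ := beta_surj H h0 hadd hdiv ht
    exact ⟨a, ha, (lengths_eq H h0 hadd hdiv ha).symm⟩
end

section
/- Let G be a finite abelian group with |G| ≥ 3. Then for every k ∈ ℕ the union of sets of lengths U_k(G) of the monoid B(G) is an interval of integers; moreover ρ(B(G)) = D(G)/2, ρ_{2k}(B(G)) = k·D(G) for every k ∈ ℕ, and 1 + k·D(G) ≤ ρ_{2k+1}(B(G)) ≤ k·D(G) + ⌊D(G)/2⌋ for every k ∈ ℕ. -/
open scoped Classical ENNReal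

section Basic
variable {G : Type*} [AddCommGroup G]

lemma mem_ZS {s : Multiset G} : s ∈ ZS G ↔ s.sum = 0 := Iff.rfl

lemma sub_mem_ZS {s t : Multiset G} (ht : t ≤ s) (h0 : t.sum = 0) (hz : s.sum = 0) :
    (s - t).sum = 0 := by
  have h : t.sum + (s - t).sum = s.sum := by
    conv_rhs => rw [(add_tsub_cancel_of_le ht).symm, Multiset.sum_add]
  rw [h0, zero_add] at h; rw [h, hz]

lemma atom_split {s : Multiset G} (hs : IsAtomIn (ZS G) s) {t : Multiset G}
    (ht : t ≤ s) (h0 : t.sum = 0) : t = 0 ∨ t = s := by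
  obtain ⟨hz, _, h⟩ := hs
  rcases h t h0 (s - t) (sub_mem_ZS ht h0 hz) (add_tsub_cancel_of_le ht).symm with h1 | h2
  · exact Or.inl h1
  · right
    have h3 := add_tsub_cancel_of_le ht
    rw [h2, add_zero] at h3; exact h3

lemma atom_ne_zero {s : Multiset G} (hs : IsAtomIn (ZS G) s) : s ≠ 0 := hs.2.1

lemma atom_sum {s : Multiset G} (hs : IsAtomIn (ZS G) s) : s.sum = 0 := hs.1

lemma atom_card_pos {s : Multiset G} (hs : IsAtomIn (ZS G) s) : 0 < Multiset.card s := by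
  simpa [Multiset.card_pos] using hs.2.1

lemma atom_zsingle : IsAtomIn (ZS G) ({0} : Multiset G) := by
  refine ⟨by simp [mem_ZS], by simp, fun v hv w hw h => ?_⟩
  have hc : Multiset.card v + Multiset.card w = 1 := by
    have := congrArg Multiset.card h; simpa using this.symm
  rcases Nat.add_eq_one_iff.mp hc with ⟨h1, _⟩ | ⟨_, h1⟩
  · exact Or.inl (Multiset.card_eq_zero.mp h1)
  · exact Or.inr (Multiset.card_eq_zero.mp h1)

lemma atom_eq_zsingle_of_zero_mem {s : Multiset G} (hs : IsAtomIn (ZS G) s)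
    (h : (0 : G) ∈ s) : s = {0} := by
  have h1 : ({0} : Multiset G) ≤ s := by simpa using h
  rcases atom_split hs h1 (by simp) with h2 | h2
  · simp at h2
  · exact h2.symm

lemma atom_two_le_card {s : Multiset G} (hs : IsAtomIn (ZS G) s) (h : s ≠ {0}) :
    2 ≤ Multiset.card s := by
  rcases Nat.lt_or_ge (Multiset.card s) 2 with h2 | h2
  · interval_cases h3 : Multiset.card s
    · exact absurd (Multiset.card_eq_zero.mp h3) (atom_ne_zero hs)
    · obtain ⟨a, ha⟩ := Multiset.card_eq_one.mp h3
      have : a = 0 := by have := atom_sum hs; rw [ha] at this; simpa using this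
      rw [this] at ha; exact absurd ha h
  · exact h2

lemma atom_zero_notMem {s : Multiset G} (hs : IsAtomIn (ZS G) s) (h : s ≠ {0}) :
    (0 : G) ∉ s := fun h0 => h (atom_eq_zsingle_of_zero_mem hs h0)

/-- every nonzero zero-sum multiset factors into atoms -/
lemma exists_factorization : ∀ (s : Multiset G), s.sum = 0 →
    ∃ l : List (Multiset G), (∀ x ∈ l, IsAtomIn (ZS G) x) ∧ l.sum = s := by
  intro s
  induction s using Multiset.strongInductionOn with
  | ih s ih =>
    intro hz
    rcases eq_or_ne s 0 with rfl | hne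
    · exact ⟨[], by simp, by simp⟩
    by_cases hat : IsAtomIn (ZS G) s
    · exact ⟨[s], by simpa using hat, by simp⟩
    · have : ∃ v ∈ ZS G, ∃ w ∈ ZS G, s = v + w ∧ v ≠ 0 ∧ w ≠ 0 := by
        by_contra hcon
        push_neg at hcon
        exact hat ⟨hz, hne, fun v hv w hw h => by
          rcases eq_or_ne v 0 with rfl | hv0
          · exact Or.inl rfl
          · exact Or.inr (hcon v hv w hw h hv0)⟩
      obtain ⟨v, hv, w, hw, rfl, hv0, hw0⟩ := this
      have hvlt : v < v + w := lt_add_of_pos_right v (pos_iff_ne_zero.mpr hw0)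
      have hwlt : w < v + w := by
        simpa [add_comm] using lt_add_of_pos_right w (pos_iff_ne_zero.mpr hv0)
      obtain ⟨lv, hlv, hlvs⟩ := ih v hvlt hv
      obtain ⟨lw, hlw, hlws⟩ := ih w hwlt hw
      exact ⟨lv ++ lw, by
        intro x hx; rcases List.mem_append.mp hx with h | h
        exacts [hlv x h, hlw x h], by simp [hlvs, hlws]⟩

end Basic

section B
variable {G : Type*} [AddCommGroup G] [Fintype G]

lemma atom_card_le_cardG {s : Multiset G} (hs : IsAtomIn (ZS G) s) :
    Multiset.card s ≤ Fintype.card G := by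
  set l := s.toList with hl
  have hls : (l : Multiset G) = s := Multiset.coe_toList s
  have hlen : l.length = Multiset.card s := by rw [← hls]; rfl
  set n := l.length with hn
  have key : ∀ i j : Fin n, i.1 < j.1 → (l.take (i.1+1)).sum ≠ (l.take (j.1+1)).sum := by
    intro i j hlt hij
    set c := (l.take (j.1+1)).drop (i.1+1) with hc
    have h1 := List.take_append_drop (i.1+1) (l.take (j.1+1))
    rw [List.take_take, min_eq_left (by omega : i.1+1 ≤ j.1+1)] at h1
    have h2 : (l.take (i.1+1)).sum + c.sum = (l.take (j.1+1)).sum := by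
      conv_rhs => rw [← h1]
      rw [List.sum_append]
    rw [← hij] at h2
    have hcs : c.sum = 0 := by
      have := add_left_cancel (a := (l.take (i.1+1)).sum) (b := c.sum) (c := 0)
        (by rw [add_zero]; exact h2)
      exact this
    have hcle : (c : Multiset G) ≤ s := by
      rw [← hls]
      exact Multiset.coe_le.mpr (List.Sublist.subperm
        (((l.take (j.1+1)).drop_sublist (i.1+1)).trans (l.take_sublist (j.1+1))))
    have hclen : c.length = j.1 - i.1 := by
      simp only [hc, List.length_drop, List.length_take]
      have := j.2; omega
    rcases atom_split hs hcle (by simpa using hcs) with h0 | h0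
    · have : c.length = 0 := by
        have := congrArg Multiset.card h0; simpa using this
      omega
    · have : c.length = n := by
        have := congrArg Multiset.card h0
        simp only [Multiset.coe_card] at this
        rw [this, ← hlen]
      have := j.2; omega
  have hinj : Function.Injective (fun i : Fin n => (l.take (i.1+1)).sum) := by
    intro i j hij
    by_contra hne
    have hne' : i.1 ≠ j.1 := fun h => hne (Fin.ext h)
    rcases Nat.lt_or_ge i.1 j.1 with h | h
    · exact key i j h hij
    · exact key j i (by omega) hij.symm
  calc Multiset.card s = n := hlen.symm
    _ = Fintype.card (Fin n) := (Fintype.card_fin n).symm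
    _ ≤ Fintype.card G := Fintype.card_le_of_injective _ hinj

lemma davenport_set_bddAbove :
    BddAbove {n : ℕ | ∃ s : Multiset G, IsAtomIn (ZS G) s ∧ Multiset.card s = n} :=
  ⟨Fintype.card G, fun n ⟨s, hs, hc⟩ => hc ▸ atom_card_le_cardG hs⟩

lemma atom_card_le_davenport {s : Multiset G} (hs : IsAtomIn (ZS G) s) :
    Multiset.card s ≤ davenport G :=
  le_csSup davenport_set_bddAbove ⟨s, hs, rfl⟩

end B

section C
variable {G : Type*} [AddCommGroup G] [Fintype G]

lemma atom_replicate {g : G} (hg : g ≠ 0) :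
    IsAtomIn (ZS G) (Multiset.replicate (addOrderOf g) g) := by
  have hpos : 0 < addOrderOf g := addOrderOf_pos g
  refine ⟨?_, ?_, ?_⟩
  · show (Multiset.replicate (addOrderOf g) g).sum = 0
    rw [Multiset.sum_replicate]
    exact addOrderOf_nsmul_eq_zero g
  · intro hcon
    have := congrArg Multiset.card hcon
    simp only [Multiset.card_replicate, Multiset.card_zero] at this; omega
  · intro v hv w hw h
    have hvle : v ≤ Multiset.replicate (addOrderOf g) g := by
      rw [h]; exact Multiset.le_add_right v w
    obtain ⟨m, hm, rfl⟩ := Multiset.le_replicate_iff.mp hvle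
    have hms : (Multiset.replicate m g).sum = 0 := hv
    rw [Multiset.sum_replicate] at hms
    have hdvd : addOrderOf g ∣ m := addOrderOf_dvd_of_nsmul_eq_zero hms
    rcases Nat.eq_zero_or_pos m with rfl | hm0
    · exact Or.inl (by simp)
    · have hmeq : m = addOrderOf g := le_antisymm hm (Nat.le_of_dvd hm0 hdvd)
      right
      have h2 := congrArg Multiset.card h
      rw [Multiset.card_add, Multiset.card_replicate, Multiset.card_replicate, hmeq] at h2
      exact Multiset.card_eq_zero.mp (by omega)

lemma exists_atom_card_davenport :
    ∃ U : Multiset G, IsAtomIn (ZS G) U ∧ Multiset.card U = davenport G := by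
  have hne : {n : ℕ | ∃ s : Multiset G, IsAtomIn (ZS G) s ∧ Multiset.card s = n}.Nonempty :=
    ⟨1, {0}, atom_zsingle, by simp⟩
  have := Nat.sSup_mem hne davenport_set_bddAbove
  exact this

lemma two_le_davenport (hG : 3 ≤ Fintype.card G) : 2 ≤ davenport G := by
  have : ∃ g : G, g ≠ 0 := by
    by_contra hcon
    push_neg at hcon
    have : Fintype.card G ≤ 1 := Fintype.card_le_one_iff.mpr fun a b => by
      rw [hcon a, hcon b]
    omega
  obtain ⟨g, hg⟩ := this
  have h2 : 2 ≤ addOrderOf g := by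
    have h1 : addOrderOf g ≠ 1 := by
      intro h
      exact hg (AddMonoid.addOrderOf_eq_one_iff.mp h)
    have := addOrderOf_pos g
    omega
  calc 2 ≤ addOrderOf g := h2
    _ = Multiset.card (Multiset.replicate (addOrderOf g) g) := by simp
    _ ≤ davenport G := le_csSup davenport_set_bddAbove ⟨_, atom_replicate hg, rfl⟩
end C

section D
variable {G : Type*} [AddCommGroup G] [Fintype G]

lemma card_list_sum (l : List (Multiset G)) :
    Multiset.card l.sum = (l.map Multiset.card).sum := by
  induction l with
  | nil => simp
  | cons a t ih => simp [ih]

lemma count_list_sum (g : G) (l : List (Multiset G)) :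
    (l.sum).count g = (l.map (Multiset.count g)).sum := by
  induction l with
  | nil => simp
  | cons a t ih => simp [ih]

lemma list_le_sum {c : ℕ} (l : List ℕ) (h : ∀ x ∈ l, c ≤ x) : l.length * c ≤ l.sum := by
  induction l with
  | nil => simp
  | cons a t ih =>
    simp only [List.length_cons, List.sum_cons]
    have := ih fun x hx => h x (List.mem_cons_of_mem _ hx)
    have := h a List.mem_cons_self
    nlinarith

lemma list_sum_le {c : ℕ} (l : List ℕ) (h : ∀ x ∈ l, x ≤ c) : l.sum ≤ l.length * c := by
  induction l with
  | nil => simp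
  | cons a t ih =>
    simp only [List.length_cons, List.sum_cons]
    have := ih fun x hx => h x (List.mem_cons_of_mem _ hx)
    have := h a List.mem_cons_self
    nlinarith

/-- the key counting inequality -/
lemma key_ineq (hD2 : 2 ≤ davenport G) {l1 l2 : List (Multiset G)} (h1 : ∀ x ∈ l1, IsAtomIn (ZS G) x)
    (h2 : ∀ x ∈ l2, IsAtomIn (ZS G) x) (hs : l1.sum = l2.sum) :
    2 * l2.length ≤ l1.length * davenport G := by
  set a := l1.sum with ha
  have hwt : ∀ (l : List (Multiset G)), (∀ x ∈ l, IsAtomIn (ZS G) x) →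
      Multiset.card l.sum + (l.sum).count 0 =
        (l.map (fun x => Multiset.card x + Multiset.count 0 x)).sum := by
    intro l hl
    rw [card_list_sum, count_list_sum]
    induction l with
    | nil => simp
    | cons x t ih =>
      simp only [List.map_cons, List.sum_cons]
      have := ih (fun y hy => hl y (List.mem_cons_of_mem _ hy))
      omega
  have hlow : 2 * l2.length ≤ Multiset.card a + a.count 0 := by
    rw [hs, hwt l2 h2]
    have hlb := list_le_sum (c := 2) (l2.map (fun x => Multiset.card x + Multiset.count 0 x)) ?_
    · simpa [mul_comm] using hlb
    intro x hx
    simp only [List.mem_map] at hx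
    obtain ⟨y, hy, rfl⟩ := hx
    have hat := h2 y hy
    by_cases hy0 : y = ({0} : Multiset G)
    · subst hy0; simp
    · have := atom_two_le_card hat hy0
      omega
  have hhigh : Multiset.card a + a.count 0 ≤ l1.length * davenport G := by
    rw [hwt l1 h1]
    have hlen : (l1.map (fun x => Multiset.card x + Multiset.count 0 x)).length = l1.length := by
      simp
    rw [← hlen]
    refine list_sum_le _ ?_
    intro x hx
    simp only [List.mem_map] at hx
    obtain ⟨y, hy, rfl⟩ := hx
    have hat := h1 y hy
    have hD := atom_card_le_davenport hat
    by_cases hy0 : y = ({0} : Multiset G)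
    · subst hy0
      have hc : Multiset.card ({0} : Multiset G) + Multiset.count (0:G) {0} = 2 := by
        simp
      omega
    · have : Multiset.count 0 y = 0 := by
        rw [Multiset.count_eq_zero]
        intro hmem
        exact hy0 (atom_eq_zsingle_of_zero_mem hat hmem)
      omega
  omega

end D

section E
variable {G : Type*} [AddCommGroup G] [Fintype G]

lemma atom_pair {g : G} (hg : g ≠ 0) : IsAtomIn (ZS G) ({g, -g} : Multiset G) := by
  refine ⟨by simp [ZS], by simp, fun v hv w hw h => ?_⟩
  by_contra hcon
  push_neg at hcon
  obtain ⟨hv0, hw0⟩ := hcon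
  have hcv := Multiset.card_pos.mpr hv0
  have hcw := Multiset.card_pos.mpr hw0
  have hcard : Multiset.card v + Multiset.card w = 2 := by
    have := congrArg Multiset.card h
    simp only [Multiset.card_add] at this
    rw [← this]; rfl
  have hv1 : Multiset.card v = 1 := by omega
  obtain ⟨x, rfl⟩ := Multiset.card_eq_one.mp hv1
  have hx : x = 0 := by have : ({x}:Multiset G).sum = 0 := hv; simpa using this
  subst hx
  have : (0:G) ∈ ({g, -g} : Multiset G) := by
    rw [h]; simp
  rcases by simpa using this with h0 | h0
  · exact hg h0.symm
  · exact hg (by rw [← neg_neg g, ← h0]; simp)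

lemma map_neg_sum (s : Multiset G) : (s.map Neg.neg).sum = -s.sum := by
  induction s using Multiset.induction_on with
  | empty => simp
  | cons a t ih => simp [ih]; abel

lemma neg_mem_ZS {s : Multiset G} (hs : s.sum = 0) : (s.map Neg.neg).sum = 0 := by
  rw [map_neg_sum, hs, neg_zero]

lemma atom_neg {s : Multiset G} (hs : IsAtomIn (ZS G) s) :
    IsAtomIn (ZS G) (s.map Neg.neg) := by
  obtain ⟨hz, hne, hsp⟩ := hs
  refine ⟨neg_mem_ZS hz, by simpa using hne, fun v hv w hw h => ?_⟩
  have hvle : v ≤ s.map Neg.neg := by rw [h]; exact Multiset.le_add_right v w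
  -- v = (v.map neg).map neg
  have hvv : v = (v.map Neg.neg).map Neg.neg := by simp [Multiset.map_map, Function.comp]
  have hwv : w = (w.map Neg.neg).map Neg.neg := by simp [Multiset.map_map, Function.comp]
  have hsv : s = (v.map Neg.neg) + (w.map Neg.neg) := by
    have : s = (s.map Neg.neg).map Neg.neg := by simp [Multiset.map_map, Function.comp]
    rw [this, h, Multiset.map_add]
  rcases hsp (v.map Neg.neg) (neg_mem_ZS hv) (w.map Neg.neg) (neg_mem_ZS hw) hsv with h0 | h0
  · left; rw [hvv, h0]; simp
  · right; rw [hwv, h0]; simp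

lemma pairs_sum (l : List G) :
    (l.map (fun g => ({g, -g} : Multiset G))).sum = (l : Multiset G) + (l : Multiset G).map Neg.neg := by
  induction l with
  | nil => simp
  | cons a t ih =>
    simp only [List.map_cons, List.sum_cons, ih]
    show ({a, -a} : Multiset G) + _ = _
    have h1 : ((a :: t : List G) : Multiset G) = a ::ₘ (t : Multiset G) := rfl
    rw [h1, Multiset.map_cons]
    have : ({a, -a} : Multiset G) = a ::ₘ (-a) ::ₘ 0 := rfl
    rw [this, Multiset.cons_add, Multiset.cons_add, zero_add, Multiset.cons_add,
      Multiset.add_cons]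

lemma UIn_add {S : Set (Multiset G)} {k1 k2 x y : ℕ} (hx : x ∈ UIn S k1) (hy : y ∈ UIn S k2) :
    x + y ∈ UIn S (k1 + k2) := by
  obtain ⟨a1, a2, ha1, ha2, ha3, ha4, ha5⟩ := hx
  obtain ⟨b1, b2, hb1, hb2, hb3, hb4, hb5⟩ := hy
  refine ⟨a1 ++ b1, a2 ++ b2, by simp [ha1, hb1], by simp [ha2, hb2], ?_, ?_, by simp [ha5, hb5]⟩
  · intro z hz; rcases List.mem_append.mp hz with h | h; exacts [ha3 z h, hb3 z h]
  · intro z hz; rcases List.mem_append.mp hz with h | h; exacts [ha4 z h, hb4 z h]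

lemma self_mem_UIn (k : ℕ) : k ∈ UIn (ZS G) k := by
  refine ⟨List.replicate k ({0} : Multiset G), List.replicate k ({0} : Multiset G),
    by simp, by simp, ?_, ?_, rfl⟩ <;>
  · intro x hx
    rw [List.eq_of_mem_replicate hx]
    exact atom_zsingle

lemma dav_mem_UIn_two (hD2 : 2 ≤ davenport G) : davenport G ∈ UIn (ZS G) 2 := by
  obtain ⟨U, hU, hUcard⟩ := exists_atom_card_davenport (G := G)
  have hUne : U ≠ {0} := by
    intro h
    rw [h] at hUcard; simp at hUcard; omega
  have h0U : (0:G) ∉ U := atom_zero_notMem hU hUne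
  refine ⟨[U, U.map Neg.neg], U.toList.map (fun g => ({g, -g} : Multiset G)),
    by simp, by simp [hUcard], ?_, ?_, ?_⟩
  · intro x hx
    simp only [List.mem_cons, List.mem_singleton] at hx
    rcases hx with rfl | hx
    · exact hU
    · simp at hx; rw [hx]; exact atom_neg hU
  · intro x hx
    simp only [List.mem_map] at hx
    obtain ⟨g, hg, rfl⟩ := hx
    have : g ∈ U := by rwa [← Multiset.mem_toList]
    exact atom_pair (fun h => h0U (h ▸ this))
  · rw [pairs_sum, Multiset.coe_toList]
    simp

end E

section F
variable {G : Type*} [AddCommGroup G]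

lemma exists_split : ∀ (l : List (Multiset G)) (x : Multiset G), x ≤ l.sum →
    ∃ xs : List (Multiset G), List.Forall₂ (· ≤ ·) xs l ∧ xs.sum = x := by
  intro l
  induction l with
  | nil =>
    intro x hx
    rw [List.sum_nil] at hx
    exact ⟨[], List.Forall₂.nil, by simp [Multiset.le_zero.mp hx]⟩
  | cons B T ih =>
    intro x hx
    rw [List.sum_cons] at hx
    have h2 : x - B ≤ T.sum := by
      rw [Multiset.sub_le_iff_le_add]
      rwa [add_comm] at hx
    obtain ⟨xs2, hf2, hs2⟩ := ih (x - B) h2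
    refine ⟨(x - (x - B)) :: xs2, List.Forall₂.cons ?_ hf2, ?_⟩
    · rw [Multiset.le_iff_count]
      intro g
      rw [Multiset.count_sub, Multiset.count_sub]
      have : Multiset.count g x ≤ Multiset.count g B + Multiset.count g T.sum := by
        have := Multiset.count_le_of_le g hx
        rwa [Multiset.count_add] at this
      omega
    · rw [List.sum_cons, hs2]
      exact tsub_add_cancel_of_le (tsub_le_self)

lemma cons_perm_shift {α : Type*} (x B1 B2 : α) (r : List α) :
    (x :: B1 :: B2 :: r).Perm (B1 :: B2 :: x :: r) :=
  (List.Perm.swap B1 x (B2 :: r)).trans ((List.Perm.swap B2 x r).cons B1)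

lemma two_or_one : ∀ {xs l2 : List (Multiset G)}, List.Forall₂ (· ≤ ·) xs l2 →
    (∃ B1 B2 : Multiset G, ∃ rest : List (Multiset G), ∃ g h : G,
      l2.Perm (B1 :: B2 :: rest) ∧ g ∈ B1 ∧ h ∈ B2 ∧ (g ::ₘ h ::ₘ 0) ≤ xs.sum)
    ∨ xs.sum = 0 ∨ (∃ B ∈ l2, xs.sum ≤ B) := by
  intro xs l2 hf
  induction hf with
  | nil => right; left; simp
  | @cons x B xs' l2' hxB hrest ih =>
    rcases ih with ⟨B1, B2, rest, g, h, hperm, hg, hh, hle⟩ | h0 | ⟨B', hB', hle⟩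
    · left
      exact ⟨B1, B2, B :: rest, g, h,
        ((hperm.cons B).trans (cons_perm_shift B B1 B2 rest)), hg, hh,
        by rw [List.sum_cons]; exact hle.trans (Multiset.le_add_left _ _)⟩
    · rcases eq_or_ne x 0 with rfl | hx0
      · right; left; simp [h0]
      · right; right
        exact ⟨B, List.mem_cons_self, by
          rw [List.sum_cons, h0, add_zero]; exact hxB⟩
    · rcases eq_or_ne x 0 with rfl | hx0
      · right; right
        exact ⟨B', List.mem_cons_of_mem B hB', by rw [List.sum_cons, zero_add]; exact hle⟩
      rcases eq_or_ne xs'.sum 0 with h0 | hs0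
      · right; right
        exact ⟨B, List.mem_cons_self, by rw [List.sum_cons, h0, add_zero]; exact hxB⟩
      · left
        obtain ⟨g, hg⟩ := Multiset.exists_mem_of_ne_zero hx0
        obtain ⟨h, hh⟩ := Multiset.exists_mem_of_ne_zero hs0
        refine ⟨B, B', l2'.erase B', g, h,
          (List.perm_cons_erase hB').cons B, Multiset.mem_of_le hxB hg,
          Multiset.mem_of_le hle hh, ?_⟩
        rw [List.sum_cons]
        have h1 : (g ::ₘ h ::ₘ 0) = ({g} : Multiset G) + {h} := rfl
        rw [h1]
        exact add_le_add (Multiset.singleton_le.mpr hg) (Multiset.singleton_le.mpr hh)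

lemma exists_crossing : ∀ (l1 l2 : List (Multiset G)), (∀ x ∈ l1, IsAtomIn (ZS G) x) →
    (∀ x ∈ l2, IsAtomIn (ZS G) x) → l1.sum = l2.sum → l1.length < l2.length →
    ∃ A ∈ l1, ∃ B1 B2 : Multiset G, ∃ rest : List (Multiset G), ∃ g h : G,
      l2.Perm (B1 :: B2 :: rest) ∧ g ∈ B1 ∧ h ∈ B2 ∧ (g ::ₘ h ::ₘ 0) ≤ A := by
  intro l1
  induction l1 with
  | nil =>
    intro l2 h1 h2 hs hlen
    exfalso
    cases l2 with
    | nil => simp at hlen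
    | cons C r =>
      have hcard := congrArg Multiset.card hs
      rw [List.sum_nil, List.sum_cons] at hcard
      simp only [Multiset.card_zero, Multiset.card_add] at hcard
      have hC0 : C = 0 := Multiset.card_eq_zero.mp (by omega)
      exact atom_ne_zero (h2 C List.mem_cons_self) hC0
  | cons A T ih =>
    intro l2 h1 h2 hs hlen
    have hA : A ≤ l2.sum := by
      rw [← hs, List.sum_cons]; exact Multiset.le_add_right A T.sum
    obtain ⟨xs, hf, hxs⟩ := exists_split l2 A hA
    rcases two_or_one hf with ⟨B1, B2, rest, g, h, hperm, hg, hh, hle⟩ | h0 | ⟨B, hB, hle⟩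
    · exact ⟨A, List.mem_cons_self, B1, B2, rest, g, h, hperm, hg, hh, hxs ▸ hle⟩
    · exact absurd (hxs ▸ h0) (atom_ne_zero (h1 A List.mem_cons_self))
    · rw [hxs] at hle
      have hAatom := h1 A List.mem_cons_self
      have hAB : A = B := by
        rcases atom_split (h2 B hB) hle (atom_sum hAatom) with h0 | h0
        · exact absurd h0 (atom_ne_zero hAatom)
        · exact h0
      subst hAB
      have hsum : T.sum = (l2.erase A).sum := by
        have hp : l2.Perm (A :: l2.erase A) := List.perm_cons_erase hB
        have := hp.sum_eq
        rw [List.sum_cons] at this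
        rw [← hs, List.sum_cons] at this
        exact add_left_cancel this
      obtain ⟨A', hA', B1, B2, rest, g, h, hperm, hg, hh, hle'⟩ :=
        ih (l2.erase A) (fun x hx => h1 x (List.mem_cons_of_mem A hx))
          (fun x hx => h2 x (List.mem_of_mem_erase hx)) hsum (by
            rw [List.length_erase_of_mem hB]
            simp only [List.length_cons] at hlen
            omega)
      exact ⟨A', List.mem_cons_of_mem A hA', B1, B2, A :: rest, g, h,
        ((List.perm_cons_erase hB).trans ((hperm.cons A).trans (cons_perm_shift A B1 B2 rest))),
        hg, hh, hle'⟩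

end F

section GG
variable {G : Type*} [AddCommGroup G]

lemma atom_glue {g h : G} {d : Multiset G} (hA : IsAtomIn (ZS G) (g ::ₘ h ::ₘ d)) :
    IsAtomIn (ZS G) ((g + h) ::ₘ d) := by
  have hAsum : g + h + d.sum = 0 := by
    have := atom_sum hA
    simp only [Multiset.sum_cons] at this
    rw [← this]; abel
  refine ⟨?_, by simp, fun v hv w hw heq => ?_⟩
  · show ((g + h) ::ₘ d).sum = 0
    rw [Multiset.sum_cons]; exact hAsum
  have hmem : g + h ∈ v + w := by rw [← heq]; exact Multiset.mem_cons_self _ _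
  rcases Multiset.mem_add.mp hmem with hm | hm
  · obtain ⟨v', rfl⟩ := Multiset.exists_cons_of_mem hm
    have hd : d = v' + w := by
      have : (g + h) ::ₘ d = (g + h) ::ₘ (v' + w) := by rw [heq, Multiset.cons_add]
      exact (Multiset.cons_inj_right _).mp this
    have hsplit : (g ::ₘ h ::ₘ d) = (g ::ₘ h ::ₘ v') + w := by
      rw [hd]; simp [Multiset.cons_add]
    have hvz : (g ::ₘ h ::ₘ v').sum = 0 := by
      have hv' : (g + h) + v'.sum = 0 := by
        have : ((g + h) ::ₘ v').sum = 0 := hv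
        rwa [Multiset.sum_cons] at this
      simp only [Multiset.sum_cons]
      rw [← hv']; abel
    rcases hA.2.2 _ hvz w hw hsplit with h0 | h0
    · exact absurd h0 (by simp)
    · exact Or.inr h0
  · obtain ⟨w', rfl⟩ := Multiset.exists_cons_of_mem hm
    have hd : d = v + w' := by
      have : (g + h) ::ₘ d = (g + h) ::ₘ (v + w') := by
        rw [heq, Multiset.add_cons]
      exact (Multiset.cons_inj_right _).mp this
    have hsplit : (g ::ₘ h ::ₘ d) = v + (g ::ₘ h ::ₘ w') := by
      rw [hd]; simp [Multiset.cons_add, Multiset.add_cons]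
    have hwz : (g ::ₘ h ::ₘ w').sum = 0 := by
      have hw' : (g + h) + w'.sum = 0 := by
        have : ((g + h) ::ₘ w').sum = 0 := hw
        rwa [Multiset.sum_cons] at this
      simp only [Multiset.sum_cons]
      rw [← hw']; abel
    rcases hA.2.2 v hv _ hwz hsplit with h0 | h0
    · exact Or.inl h0
    · exact absurd h0 (by simp)

lemma surgery {l1 l2 : List (Multiset G)} (h1 : ∀ x ∈ l1, IsAtomIn (ZS G) x)
    (h2 : ∀ x ∈ l2, IsAtomIn (ZS G) x) (hs : l1.sum = l2.sum)
    (hlen : l1.length < l2.length) :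
    ∃ l1' l2' : List (Multiset G), (∀ x ∈ l1', IsAtomIn (ZS G) x) ∧
      (∀ x ∈ l2', IsAtomIn (ZS G) x) ∧ l1'.sum = l2'.sum ∧
      l1'.length = l1.length ∧ l2.length - 1 ≤ l2'.length ∧
      Multiset.card l1'.sum < Multiset.card l1.sum := by
  obtain ⟨A, hAmem, B1, B2, rest, g, h, hperm, hg, hh, hle⟩ :=
    exists_crossing l1 l2 h1 h2 hs hlen
  obtain ⟨d, hd⟩ := Multiset.le_iff_exists_add.mp hle
  have hd' : A = g ::ₘ h ::ₘ d := by
    rw [hd]; simp [Multiset.cons_add]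
  obtain ⟨b1, rfl⟩ := Multiset.exists_cons_of_mem hg
  obtain ⟨b2, rfl⟩ := Multiset.exists_cons_of_mem hh
  have hAatom := h1 A hAmem
  rw [hd'] at hAatom
  -- new first list
  set Anew := (g + h) ::ₘ d with hAnew
  have hAnewAtom := atom_glue hAatom
  set T := l1.erase A with hT
  have hperm1 : l1.Perm (A :: T) := List.perm_cons_erase hAmem
  -- C
  have hB1sum : g + b1.sum = 0 := by
    have := atom_sum (h2 _ (hperm.mem_iff.mpr List.mem_cons_self))
    simpa using this
  have hB2sum : h + b2.sum = 0 := by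
    have := atom_sum (h2 _ (hperm.mem_iff.mpr (List.mem_cons_of_mem _ List.mem_cons_self)))
    simpa using this
  set C := (g + h) ::ₘ (b1 + b2) with hC
  have hCsum : C.sum = 0 := by
    rw [hC, Multiset.sum_cons, Multiset.sum_add]
    have : g + h + (b1.sum + b2.sum) = (g + b1.sum) + (h + b2.sum) := by abel
    rw [this, hB1sum, hB2sum, add_zero]
  obtain ⟨lc, hlc, hlcsum⟩ := exists_factorization C hCsum
  have hlcne : lc ≠ [] := by
    intro hnil
    rw [hnil] at hlcsum
    simp only [List.sum_nil] at hlcsum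
    exact Multiset.cons_ne_zero hlcsum.symm
  refine ⟨Anew :: T, lc ++ rest, ?_, ?_, ?_, ?_, ?_, ?_⟩
  · intro x hx
    rcases List.mem_cons.mp hx with rfl | hx
    · exact hAnewAtom
    · exact h1 x (List.mem_of_mem_erase hx)
  · intro x hx
    rcases List.mem_append.mp hx with hx | hx
    · exact hlc x hx
    · exact h2 x (hperm.mem_iff.mpr (List.mem_cons_of_mem _ (List.mem_cons_of_mem _ hx)))
  · -- sums
    have hS1 : l1.sum = (g ::ₘ h ::ₘ d) + T.sum := by
      rw [hperm1.sum_eq, List.sum_cons, hd']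
    have hS2 : l2.sum = (g ::ₘ b1) + ((h ::ₘ b2) + rest.sum) := by
      rw [hperm.sum_eq]; simp [List.sum_cons]
    have hkey : d + T.sum = b1 + b2 + rest.sum := by
      have heq : (g ::ₘ h ::ₘ 0) + (d + T.sum) = (g ::ₘ h ::ₘ 0) + (b1 + b2 + rest.sum) := by
        have e1 : (g ::ₘ h ::ₘ (0:Multiset G)) + (d + T.sum) = (g ::ₘ h ::ₘ d) + T.sum := by
          simp [Multiset.cons_add]
        have e2 : (g ::ₘ h ::ₘ (0:Multiset G)) + (b1 + b2 + rest.sum)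
            = (g ::ₘ b1) + ((h ::ₘ b2) + rest.sum) := by
          simp only [Multiset.cons_add, Multiset.add_cons, zero_add, add_assoc]
          rw [Multiset.cons_swap]
        rw [e1, e2, ← hS1, ← hS2, hs]
      exact add_left_cancel heq
    show Anew + T.sum = (lc ++ rest).sum
    rw [List.sum_append, hlcsum, hAnew, hC, Multiset.cons_add, Multiset.cons_add, hkey]
  · show T.length + 1 = l1.length
    rw [hT, List.length_erase_of_mem hAmem]
    have : 0 < l1.length := List.length_pos_iff.mpr (List.ne_nil_of_mem hAmem)
    omega
  · have hr : rest.length = l2.length - 2 := by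
      have := hperm.length_eq
      simp only [List.length_cons] at this
      omega
    have hlc1 : 1 ≤ lc.length := List.length_pos_iff.mpr hlcne
    rw [List.length_append]
    omega
  · have hc1 : Multiset.card l1.sum = Multiset.card ((g ::ₘ h ::ₘ d) + T.sum) := by
      rw [hperm1.sum_eq, List.sum_cons, hd']
    rw [hc1]
    show Multiset.card (Anew + T.sum) < _
    rw [hAnew]
    simp only [Multiset.card_add, Multiset.card_cons]
    omega

end GG

section H
variable {G : Type*} [AddCommGroup G]

lemma interpolate_aux : ∀ (n : ℕ) (l1 l2 : List (Multiset G)),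
    Multiset.card l1.sum ≤ n → (∀ x ∈ l1, IsAtomIn (ZS G) x) →
    (∀ x ∈ l2, IsAtomIn (ZS G) x) → l1.sum = l2.sum →
    ∀ i, l1.length ≤ i → i ≤ l2.length → i ∈ UIn (ZS G) l1.length := by
  intro n
  induction n with
  | zero =>
    intro l1 l2 hcard h1 h2 hs i hi1 hi2
    -- l2 must be empty
    have hl2 : l2.length = 0 := by
      by_contra hne
      cases l2 with
      | nil => simp at hne
      | cons C r =>
        have hcc := congrArg Multiset.card hs
        rw [List.sum_cons, Multiset.card_add] at hcc
        have := atom_card_pos (h2 C List.mem_cons_self)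
        omega
    have : i = l2.length := by omega
    subst this
    rw [hl2] at hi1 ⊢
    exact ⟨l1, l2, rfl, hl2, h1, h2, hs⟩
  | succ n ih =>
    intro l1 l2 hcard h1 h2 hs i hi1 hi2
    rcases eq_or_lt_of_le hi2 with rfl | hlt
    · exact ⟨l1, l2, rfl, rfl, h1, h2, hs⟩
    · have hlen : l1.length < l2.length := by omega
      obtain ⟨l1', l2', h1', h2', hs', hlen1, hlen2, hcard'⟩ := surgery h1 h2 hs hlen
      have := ih l1' l2' (by omega) h1' h2' hs' i (by omega) (by omega)
      rwa [hlen1] at this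

lemma interpolate {l1 l2 : List (Multiset G)}
    (h1 : ∀ x ∈ l1, IsAtomIn (ZS G) x) (h2 : ∀ x ∈ l2, IsAtomIn (ZS G) x)
    (hs : l1.sum = l2.sum) {i : ℕ} (hi1 : l1.length ≤ i) (hi2 : i ≤ l2.length) :
    i ∈ UIn (ZS G) l1.length :=
  interpolate_aux (Multiset.card l1.sum) l1 l2 le_rfl h1 h2 hs i hi1 hi2

lemma UIn_symm {k ℓ : ℕ} (h : ℓ ∈ UIn (ZS G) k) : k ∈ UIn (ZS G) ℓ := by
  obtain ⟨l1, l2, ha, hb, hc, hd, he⟩ := h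
  exact ⟨l2, l1, hb, ha, hd, hc, he.symm⟩

lemma UIn_interval {k x y z : ℕ} (hx : x ∈ UIn (ZS G) k) (hz : z ∈ UIn (ZS G) k)
    (hxy : x ≤ y) (hyz : y ≤ z) : y ∈ UIn (ZS G) k := by
  rcases Nat.lt_or_ge y k with hky | hky
  case _ => -- y < k, moved below
    obtain ⟨l1, l2, ha, hb, hc, hd, he⟩ := hx
    have hxk : x ≤ k := by omega
    set dpad := y - x with hdpad
    set l1p := l1 ++ List.replicate dpad ({0} : Multiset G) with hl1p
    set l2p := l2 ++ List.replicate dpad ({0} : Multiset G) with hl2p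
    have h1p : ∀ w ∈ l1p, IsAtomIn (ZS G) w := by
      intro w hw
      rcases List.mem_append.mp hw with hw | hw
      · exact hc w hw
      · rw [List.eq_of_mem_replicate hw]; exact atom_zsingle
    have h2p : ∀ w ∈ l2p, IsAtomIn (ZS G) w := by
      intro w hw
      rcases List.mem_append.mp hw with hw | hw
      · exact hd w hw
      · rw [List.eq_of_mem_replicate hw]; exact atom_zsingle
    have hsp : l2p.sum = l1p.sum := by
      rw [hl1p, hl2p, List.sum_append, List.sum_append, he]
    have hl2plen : l2p.length = y := by
      rw [hl2p, List.length_append, List.length_replicate, hb]; omega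
    have hl1plen : l1p.length = k + dpad := by
      rw [hl1p, List.length_append, List.length_replicate, ha]
    have hk : k ∈ UIn (ZS G) l2p.length := by
      refine interpolate h2p h1p hsp (i := k) ?_ ?_
      · rw [hl2plen]; omega
      · rw [hl1plen]; omega
    rw [hl2plen] at hk
    exact UIn_symm hk
  case _ => -- use z : k ≤ y ≤ z
    obtain ⟨l1, l2, ha, hb, hc, hd, he⟩ := hz
    have := interpolate hc hd he (i := y) (by omega) (by omega)
    rwa [ha] at this

end H

section I
variable {G : Type*} [AddCommGroup G] [Fintype G]

lemma kdav_mem_UIn (hD2 : 2 ≤ davenport G) (k : ℕ) :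
    k * davenport G ∈ UIn (ZS G) (2 * k) := by
  induction k with
  | zero => simpa using self_mem_UIn 0
  | succ k ih =>
    have := UIn_add ih (dav_mem_UIn_two hD2)
    have h1 : k * davenport G + davenport G = (k+1) * davenport G := by ring
    have h2 : 2 * k + 2 = 2 * (k + 1) := by ring
    rwa [h1, h2] at this

lemma rho_even (hD2 : 2 ≤ davenport G) (k : ℕ) (hk : 1 ≤ k) :
    rhoKIn (ZS G) (2 * k) = ((k * davenport G : ℕ) : ℝ≥0∞) := by
  apply le_antisymm
  · refine iSup₂_le fun ℓ hℓ => ?_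
    obtain ⟨l1, l2, ha, hb, hc, hd, he⟩ := hℓ
    have := key_ineq hD2 hc hd he
    rw [ha, hb] at this
    exact_mod_cast Nat.cast_le.mpr (by nlinarith : ℓ ≤ k * davenport G)
  · exact le_iSup₂ (f := fun ℓ (_ : ℓ ∈ UIn (ZS G) (2*k)) => (ℓ:ℝ≥0∞)) _ (kdav_mem_UIn hD2 k)

lemma rho_odd_low (hD2 : 2 ≤ davenport G) (k : ℕ) :
    ((1 + k * davenport G : ℕ) : ℝ≥0∞) ≤ rhoKIn (ZS G) (2 * k + 1) := by
  have hmem : 1 + k * davenport G ∈ UIn (ZS G) (2 * k + 1) := by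
    have := UIn_add (self_mem_UIn (G := G) 1) (kdav_mem_UIn hD2 k)
    rwa [add_comm 1 (2*k)] at this
  exact le_iSup₂ (f := fun ℓ (_ : ℓ ∈ UIn (ZS G) (2*k+1)) => (ℓ:ℝ≥0∞)) _ hmem

lemma rho_odd_high (hD2 : 2 ≤ davenport G) (k : ℕ) :
    rhoKIn (ZS G) (2 * k + 1) ≤ ((k * davenport G + davenport G / 2 : ℕ) : ℝ≥0∞) := by
  refine iSup₂_le fun ℓ hℓ => ?_
  obtain ⟨l1, l2, ha, hb, hc, hd, he⟩ := hℓ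
  have := key_ineq hD2 hc hd he
  rw [ha, hb] at this
  have hexp : (2*k+1) * davenport G = 2*(k*davenport G) + davenport G := by ring
  exact Nat.cast_le.mpr (by omega)

end I

section J
variable {G : Type*} [AddCommGroup G] [Fintype G]

lemma card_le_of_lengths {a : Multiset G} {l : List (Multiset G)}
    (hl : ∀ x ∈ l, IsAtomIn (ZS G) x) (hsum : l.sum = a) :
    Multiset.card a ≤ l.length * davenport G := by
  rw [← hsum, card_list_sum]
  have := list_sum_le (c := davenport G) (l.map Multiset.card) ?_
  · simpa using this
  · intro x hx
    simp only [List.mem_map] at hx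
    obtain ⟨y, hy, rfl⟩ := hx
    exact atom_card_le_davenport (hl y hy)

lemma lengthsIn_zero : lengthsIn (ZS G) (0 : Multiset G) = {0} := by
  ext n
  simp only [Set.mem_singleton_iff]
  constructor
  · rintro ⟨l, hlen, hl, hsum⟩
    by_contra hn
    have hlpos : 0 < l.length := by omega
    cases l with
    | nil => simp at hlpos
    | cons C r =>
      have hc := congrArg Multiset.card hsum
      rw [List.sum_cons, Multiset.card_add] at hc
      simp only [Multiset.card_zero] at hc
      have := atom_card_pos (hl C List.mem_cons_self)
      omega
  · rintro rfl
    exact ⟨[], rfl, by simp, rfl⟩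

lemma setElasticity_le (hD2 : 2 ≤ davenport G) (a : Multiset G) (ha : a ∈ ZS G) :
    setElasticity (lengthsIn (ZS G) a) ≤ (davenport G : ℝ≥0∞) / 2 := by
  set L := lengthsIn (ZS G) a with hLdef
  rw [setElasticity]
  split_ifs with h0
  · -- 1 ≤ D/2
    calc (1:ℝ≥0∞) = 2 / 2 := by
          rw [ENNReal.div_self (by norm_num) (by norm_num)]
      _ ≤ (davenport G : ℝ≥0∞) / 2 := by
          apply ENNReal.div_le_div_right
          exact_mod_cast hD2
  · rcases Set.eq_empty_or_nonempty L with hemp | hne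
    · rw [hemp]
      simp
    · have hm := Nat.sInf_mem hne
      set m := sInf L with hm'
      obtain ⟨lm, hlmlen, hlm, hlmsum⟩ := hm
      have hm1 : 1 ≤ m := by
        by_contra hcon
        have : m = 0 := by omega
        rw [this] at hlmlen
        have : lm = [] := List.length_eq_zero_iff.mp hlmlen
        rw [this] at hlmsum
        simp only [List.sum_nil] at hlmsum
        rw [hLdef, ← hlmsum, lengthsIn_zero] at h0
        exact h0 rfl
      have hsup : (⨆ n ∈ L, (n : ℝ≥0∞)) ≤ (m : ℝ≥0∞) * ((davenport G : ℝ≥0∞) / 2) := by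
        refine iSup₂_le fun n hn => ?_
        obtain ⟨ln, hlnlen, hln, hlnsum⟩ := hn
        have hkey := key_ineq hD2 hlm hln (by rw [hlmsum, hlnsum])
        rw [hlmlen, hlnlen] at hkey
        rw [mul_div_assoc', ENNReal.le_div_iff_mul_le (by norm_num) (by norm_num)]
        calc (n:ℝ≥0∞) * 2 = ((n * 2 : ℕ) : ℝ≥0∞) := by push_cast; ring
          _ ≤ ((m * davenport G : ℕ) : ℝ≥0∞) := by
              exact_mod_cast (by omega : n * 2 ≤ m * davenport G)
          _ = (m:ℝ≥0∞) * (davenport G:ℝ≥0∞) := by push_cast; ring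
      rw [ENNReal.div_le_iff (by exact_mod_cast (by omega : m ≠ 0)) (by simp)]
      rwa [mul_comm] at hsup

lemma setElasticity_ge (hD2 : 2 ≤ davenport G) :
    ∃ a ∈ ZS G, (davenport G : ℝ≥0∞) / 2 ≤ setElasticity (lengthsIn (ZS G) a) := by
  obtain ⟨U, hU, hUcard⟩ := exists_atom_card_davenport (G := G)
  have hUne : U ≠ ({0}:Multiset G) := by
    intro h
    rw [h] at hUcard; simp at hUcard; omega
  have h0U : (0:G) ∉ U := atom_zero_notMem hU hUne
  set a := U + U.map Neg.neg with hadef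
  have haZ : a ∈ ZS G := by
    show a.sum = 0
    rw [hadef, Multiset.sum_add, map_neg_sum, hU.1, neg_zero, add_zero]
  refine ⟨a, haZ, ?_⟩
  set L := lengthsIn (ZS G) a with hLdef
  have h2L : 2 ∈ L := ⟨[U, U.map Neg.neg], rfl, by
      intro x hx
      rcases List.mem_cons.mp hx with rfl | hx
      · exact hU
      · simp only [List.mem_singleton] at hx
        rw [hx]; exact atom_neg hU, by simp [hadef]⟩
  have hDL : davenport G ∈ L := by
    refine ⟨U.toList.map (fun g => ({g, -g} : Multiset G)), by simp [hUcard], ?_, ?_⟩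
    · intro x hx
      simp only [List.mem_map] at hx
      obtain ⟨g, hg, rfl⟩ := hx
      have : g ∈ U := by rwa [← Multiset.mem_toList]
      exact atom_pair (fun h => h0U (h ▸ this))
    · rw [pairs_sum, Multiset.coe_toList, hadef]
  have hL2 : ∀ n ∈ L, 2 ≤ n := by
    intro n hn
    obtain ⟨ln, hlnlen, hln, hlnsum⟩ := hn
    have hcard := card_le_of_lengths hln hlnsum
    have hacard : Multiset.card a = 2 * davenport G := by
      rw [hadef, Multiset.card_add, Multiset.card_map, hUcard]; ring
    rw [hacard, hlnlen] at hcard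
    nlinarith
  have hInf : sInf L = 2 := le_antisymm (Nat.sInf_le h2L) (hL2 _ (Nat.sInf_mem ⟨2, h2L⟩))
  have hLne : L ≠ {0} := by
    intro h
    have := hL2 0 (h ▸ rfl)
    omega
  rw [setElasticity, if_neg hLne, hInf]
  refine ENNReal.div_le_div_right ?_ _
  exact le_iSup₂ (f := fun n (_ : n ∈ L) => (n:ℝ≥0∞)) _ hDL

lemma elasticity_eq (hD2 : 2 ≤ davenport G) :
    elasticityIn (ZS G) = (davenport G : ℝ≥0∞) / 2 := by
  apply le_antisymm
  · exact iSup₂_le fun a ha => setElasticity_le hD2 a ha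
  · obtain ⟨a, ha, hge⟩ := setElasticity_ge hD2
    exact hge.trans (le_iSup₂ (f := fun a (_ : a ∈ ZS G) => setElasticity (lengthsIn (ZS G) a)) _ ha)
end J

theorem stmt17 {G : Type*} [AddCommGroup G] [Fintype G] (hG : 3 ≤ Fintype.card G) :
    (∀ k : ℕ, 1 ≤ k → ∀ x y z : ℕ, x ∈ UIn (ZS G) k → z ∈ UIn (ZS G) k →
      x ≤ y → y ≤ z → y ∈ UIn (ZS G) k) ∧
    elasticityIn (ZS G) = (davenport G : ℝ≥0∞) / 2 ∧
    (∀ k : ℕ, 1 ≤ k → rhoKIn (ZS G) (2 * k) = ((k * davenport G : ℕ) : ℝ≥0∞)) ∧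
    (∀ k : ℕ, 1 ≤ k →
      ((1 + k * davenport G : ℕ) : ℝ≥0∞) ≤ rhoKIn (ZS G) (2 * k + 1) ∧
      rhoKIn (ZS G) (2 * k + 1) ≤ ((k * davenport G + davenport G / 2 : ℕ) : ℝ≥0∞)) := by
  have hD2 : 2 ≤ davenport G := two_le_davenport hG
  exact ⟨fun k _ x y z hx hz hxy hyz => UIn_interval hx hz hxy hyz,
    elasticity_eq hD2,
    fun k hk => rho_even hD2 k hk,
    fun k hk => ⟨rho_odd_low hD2 k, rho_odd_high hD2 k⟩⟩
end
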